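/- arXiv:2402.17143 — 3 statements merged into one kernel-verified Lean document; each statement's English description precedes it below -/
import Mathlib

section
/- Consider the energy plus flow time objective with α = 2 and unit-work jobs (p_j = 1). For each integer n ≥ 1, let Ĵ_n be the instance of n unit jobs in which one job is released at time 0 and the remaining n − 1 jobs are released at time 1/√n, and let 𝒥' be the instance consisting only of the single unit job released at time 0. Every non-anticipatory deterministic algorithm with predictions 𝒜 that is exactly optimal on the correctly predicted instance, i.e. cost(𝒜(Ĵ_n, Ĵ_n), Ĵ_n) = OPT(Ĵ_n), satisfies cost(𝒜(Ĵ_n, 𝒥'), 𝒥') ≥ ((√n + 1/√n)/2)·OPT(𝒥'). In particular, no 1-consistent algorithm is o(√n)-robust, even when all jobs have unit-size work and 𝒥 ⊆ Ĵ. -/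
/-! STATEMENT 7 (Proposition B.1): no 1-consistent algorithm for energy plus flow time (α = 2) is o(√n)-robust, even with unit jobs and 𝒥 ⊆ Ĵ. -/

open MeasureTheory Finset
open scoped ENNReal BigOperators Classical

/-- A job: identifier, release time, processing time. -/
structure Job where
  id : ℕ
  r : ℝ
  p : ℝ

noncomputable instance : DecidableEq Job := Classical.decEq _

/-- An instance is valid when release times are nonnegative and processing
times are positive. -/
def ValidInstance (J : Finset Job) : Prop :=
  ∀ j ∈ J, 0 ≤ j.r ∧ 0 < j.p

/-- A schedule: speed functions for jobs. -/
abbrev Sched := Job → ℝ → ℝ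

/-- `S` is a feasible schedule for the instance `J`. -/
def Feasible (J : Finset Job) (S : Sched) : Prop :=
  ∀ j ∈ J, Measurable (S j) ∧ (∀ t, 0 ≤ S j t) ∧ (∀ t, t < j.r → S j t = 0) ∧
    (∫ t in Set.Ici j.r, S j t) = j.p

/-- Work profile of job `j` under schedule `S`: remaining work at time `t`. -/
noncomputable def work (S : Sched) (j : Job) (t : ℝ) : ℝ :=
  j.p - ∫ u in Set.Icc j.r t, S j u

/-- Energy consumption of schedule `S` on instance `J`, with exponent `α = 2`. -/
noncomputable def energy (J : Finset Job) (S : Sched) : ℝ≥0∞ :=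
  ∫⁻ t in Set.Ioi (0 : ℝ), ENNReal.ofReal ((∑ j ∈ J, S j t) ^ 2)

/-- Completion time of job `j` under schedule `S`:
`inf {t ≥ r_j : w_j^S(t) = 0}` (equal to `∞` if `j` is never completed). -/
noncomputable def ctime (S : Sched) (j : Job) : ℝ≥0∞ :=
  ⨅ (t : ℝ) (_ : j.r ≤ t ∧ work S j t = 0), ENNReal.ofReal t

/-- Total flow time `Σ_j (c_j^S − r_j)` of schedule `S` on instance `J`. -/
noncomputable def flowTime (S : Sched) (J : Finset Job) : ℝ≥0∞ :=
  ∑ j ∈ J, (ctime S j - ENNReal.ofReal j.r)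

/-- Energy plus (total) flow time cost, with `α = 2`. -/
noncomputable def cost (S : Sched) (J : Finset Job) : ℝ≥0∞ :=
  energy J S + flowTime S J

/-- Optimal (offline) energy plus flow time cost of an instance. -/
noncomputable def OPT (J : Finset Job) : ℝ≥0∞ :=
  ⨅ (S : Sched) (_ : Feasible J S), cost S J

/-- Jobs of `J` released at or before time `t`. -/
noncomputable def restrictLE (J : Finset Job) (t : ℝ) : Finset Job :=
  J.filter fun j => j.r ≤ t

/-- A deterministic algorithm with predictions maps a pair
(prediction, true instance) to a schedule for the true instance. -/
abbrev AlgP := Finset Job → Finset Job → Sched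

/-- The algorithm always returns a feasible schedule for the true instance. -/
def AlgFeasible (A : AlgP) : Prop :=
  ∀ Jhat J : Finset Job, Feasible J (A Jhat J)

/-- Non-anticipation: if two instances agree on the jobs released at or before
time `t`, the algorithm assigns the same speeds on `[0,t]` to these jobs. -/
def NonAnticipatory (A : AlgP) : Prop :=
  ∀ (Jhat J J' : Finset Job) (t : ℝ), restrictLE J t = restrictLE J' t →
    ∀ j ∈ restrictLE J t, ∀ u ≤ t, A Jhat J j u = A Jhat J' j u

/-- Abel-type summation inequality. -/
lemma abel_ineq (n : ℕ) (c w v : ℕ → ℝ) (hc : ∀ i j, i ≤ j → c j ≤ c i)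
    (hc0 : ∀ i, i < n → 0 ≤ c i)
    (hwv : ∀ i, i < n → ∑ m ∈ Finset.range (i+1), v m ≤ ∑ m ∈ Finset.range (i+1), w m) :
    ∑ i ∈ Finset.range n, c i * v i ≤ ∑ i ∈ Finset.range n, c i * w i := by
  induction n generalizing c with
  | zero => simp
  | succ n ih =>
    have key : ∀ x : ℕ → ℝ, ∑ i ∈ Finset.range (n+1), c i * x i
        = ∑ i ∈ Finset.range n, (c i - c n) * x i + c n * ∑ i ∈ Finset.range (n+1), x i := by
      intro x
      rw [Finset.mul_sum, Finset.sum_range_succ (fun i => c i * x i),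
        Finset.sum_range_succ (fun i => c n * x i), ← add_assoc, ← Finset.sum_add_distrib]
      congr 1
      apply Finset.sum_congr rfl
      intro i _
      ring
    rw [key v, key w]
    have h1 : ∑ i ∈ Finset.range n, (c i - c n) * v i ≤ ∑ i ∈ Finset.range n, (c i - c n) * w i := by
      apply ih
      · intro i j hij; simp only [sub_le_sub_iff_right]; exact hc i j hij
      · intro i hi; simp only [sub_nonneg]; exact hc i n (Nat.le_of_lt hi)
      · intro i hi; exact hwv i (Nat.lt_succ_of_lt hi)
    have h2 : c n * ∑ i ∈ Finset.range (n+1), v i ≤ c n * ∑ i ∈ Finset.range (n+1), w i :=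
      mul_le_mul_of_nonneg_left (hwv n (Nat.lt_succ_self n)) (hc0 n (Nat.lt_succ_self n))
    exact add_le_add h1 h2

/-- Sum swap: `∑_{i<n} ∑_{m≤i} d m = ∑_{m<n} (n-m) d m`. -/
lemma sum_swap_tri (n : ℕ) (d : ℕ → ℝ) :
    ∑ i ∈ Finset.range n, (∑ m ∈ Finset.range (i+1), d m)
      = ∑ m ∈ Finset.range n, ((n : ℝ) - m) * d m := by
  induction n with
  | zero => simp
  | succ n ih =>
    rw [Finset.sum_range_succ, ih]
    have : ∑ m ∈ Finset.range (n+1), (((n+1:ℕ):ℝ) - m) * d m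
        = ∑ m ∈ Finset.range (n+1), (((n:ℝ) - m) * d m + d m) := by
      apply Finset.sum_congr rfl; intro i _; push_cast; ring
    rw [this, Finset.sum_add_distrib, Finset.sum_range_succ (fun m => ((n:ℝ) - m) * d m),
      sub_self, zero_mul, add_zero]

/-- monotonicity of `x + 1/x` style bound. -/
lemma inv_add_self_bound {t e η : ℝ} (ht : 0 < t) (he : 0 < e) (he1 : e ≤ 1)
    (hη : 0 ≤ η) (hte : t ≤ e + η) : e + 1/e - η/e^2 ≤ t + 1/t := by
  rcases le_or_gt t e with h | h
  · have h1 : t * e ≤ 1 := by nlinarith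
    have key : e + 1/e ≤ t + 1/t := by
      rw [← sub_nonneg]
      have expand : t + 1/t - (e + 1/e) = (e - t) * (1 - t*e) / (t*e) := by
        field_simp; ring
      rw [expand]
      have : 0 ≤ (e - t) * (1 - t*e) := mul_nonneg (by linarith) (by linarith)
      positivity
    nlinarith [div_nonneg hη (sq_nonneg e)]
  · have h2 : 1/(e+η) ≤ 1/t := one_div_le_one_div_of_le ht hte
    have h3 : 1/e - η/e^2 ≤ 1/(e+η) := by
      rw [div_sub_div _ _ (ne_of_gt he) (by positivity), div_le_div_iff₀ (by positivity) (by positivity)]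
      nlinarith [sq_nonneg η]
    nlinarith
/-- Cauchy–Schwarz lower bound for the energy on an interval. -/
lemma cs_bound (f : ℝ → ℝ) (hf : Measurable f) (hnn : ∀ t, 0 ≤ f t) (a b : ℝ) :
    ENNReal.ofReal ((∫ t in Set.Ioc a b, f t)^2 / (b - a)) ≤
      ∫⁻ t in Set.Ioc a b, ENNReal.ofReal ((f t)^2) := by
  rcases le_or_gt b a with hba | hab
  · rw [Set.Ioc_eq_empty (not_lt.mpr hba)]
    simp
  set μ := volume.restrict (Set.Ioc a b) with hμ
  by_cases hi : Integrable f μ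
  swap
  · rw [MeasureTheory.integral_undef hi]
    simp
  set w := ∫ t, f t ∂μ with hw
  have hw0 : 0 ≤ w := integral_nonneg (fun t => hnn t)
  set g : ℝ → ℝ≥0∞ := fun t => ENNReal.ofReal (f t) with hg
  have hgm : Measurable g := hf.ennreal_ofReal
  have step1 : ENNReal.ofReal w ≤ ∫⁻ t, g t ∂μ := by
    rw [MeasureTheory.ofReal_integral_eq_lintegral_ofReal hi (Filter.Eventually.of_forall hnn)]
  have step2 : ∫⁻ t, g t ∂μ ≤ (∫⁻ t, g t ^ (2:ℝ) ∂μ) ^ ((1:ℝ)/2) * (μ Set.univ) ^ ((1:ℝ)/2) := by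
    have hconj : (2:ℝ).HolderConjugate 2 := by
      exact Real.HolderConjugate.two_two
    have := ENNReal.lintegral_mul_le_Lp_mul_Lq μ hconj hgm.aemeasurable
      (aemeasurable_const (b := (1:ℝ≥0∞)))
    simpa using this
  have hμuniv : μ Set.univ = ENNReal.ofReal (b - a) := by
    rw [hμ, Measure.restrict_apply MeasurableSet.univ, Set.univ_inter, Real.volume_Ioc]
  have hE : ∫⁻ t, g t ^ (2:ℝ) ∂μ = ∫⁻ t, ENNReal.ofReal ((f t)^2) ∂μ := by
    apply lintegral_congr
    intro t
    show ENNReal.ofReal (f t) ^ (2:ℝ) = ENNReal.ofReal (f t ^ 2)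
    rw [show ((2:ℝ)) = ((2:ℕ):ℝ) by norm_num, ENNReal.rpow_natCast,
      ← ENNReal.ofReal_pow (hnn t)]
  set E := ∫⁻ t, ENNReal.ofReal ((f t)^2) ∂μ with hEdef
  rw [hE, hμuniv] at step2
  have sq : ENNReal.ofReal w ^ (2:ℝ) ≤ E * ENNReal.ofReal (b - a) := by
    calc ENNReal.ofReal w ^ (2:ℝ)
        ≤ (E ^ ((1:ℝ)/2) * ENNReal.ofReal (b-a) ^ ((1:ℝ)/2)) ^ (2:ℝ) := by
          apply ENNReal.rpow_le_rpow (le_trans step1 step2) (by norm_num)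
      _ = E * ENNReal.ofReal (b - a) := by
          rw [ENNReal.mul_rpow_of_nonneg _ _ (by norm_num), ← ENNReal.rpow_mul, ← ENNReal.rpow_mul]
          norm_num
  have sq' : ENNReal.ofReal (w^2) ≤ E * ENNReal.ofReal (b - a) := by
    rw [show ((2:ℝ)) = ((2:ℕ):ℝ) by norm_num, ENNReal.rpow_natCast,
      ← ENNReal.ofReal_pow hw0] at sq
    exact sq
  have hM0 : ENNReal.ofReal (b - a) ≠ 0 := by
    simp only [ne_eq, ENNReal.ofReal_eq_zero, not_le]; linarith
  have hMtop : ENNReal.ofReal (b - a) ≠ ⊤ := ENNReal.ofReal_ne_top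
  rw [← ENNReal.mul_le_mul_iff_left hM0 hMtop (a := ENNReal.ofReal (w^2/(b-a)))]
  calc ENNReal.ofReal (w^2/(b-a)) * ENNReal.ofReal (b-a)
      = ENNReal.ofReal (w^2/(b-a) * (b-a)) := (ENNReal.ofReal_mul (div_nonneg (sq_nonneg w) (by linarith))).symm
    _ = ENNReal.ofReal (w^2) := by rw [div_mul_cancel₀]; linarith
    _ ≤ E * ENNReal.ofReal (b-a) := sq'
lemma ofReal_sum_le {ι : Type*} (s : Finset ι) (f : ι → ℝ) :
    ENNReal.ofReal (∑ i ∈ s, f i) ≤ ∑ i ∈ s, ENNReal.ofReal (f i) := by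
  induction s using Finset.cons_induction with
  | empty => simp
  | cons a s ha ih =>
    rw [Finset.sum_cons, Finset.sum_cons]
    exact le_trans ENNReal.ofReal_add_le (add_le_add_right ih _)

lemma amgm_bound {k d w q : ℝ} (hk : 0 ≤ k) (hd : 0 ≤ d) (hw : 0 ≤ w)
    (hd0 : d = 0 → w = 0) (hq : w^2/d ≤ q) : 2 * Real.sqrt k * w ≤ k * d + q := by
  rcases eq_or_lt_of_le hd with h | h
  · have hw0 : w = 0 := hd0 h.symm
    subst hw0
    have : (0:ℝ)^2/d = 0 := by simp
    nlinarith [Real.sqrt_nonneg k]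
  · have key : k * d^2 + w^2 - 2*Real.sqrt k * w * d ≥ 0 := by
      nlinarith [sq_nonneg (Real.sqrt k * d - w), Real.sq_sqrt hk]
    have h2 : 0 ≤ (k * d^2 + w^2 - 2*Real.sqrt k * w * d) / d := div_nonneg key h.le
    have h3 : (k * d^2 + w^2 - 2*Real.sqrt k * w * d) / d = k*d + w^2/d - 2*Real.sqrt k*w := by
      field_simp
    nlinarith [h3 ▸ h2]

lemma chain_mono (U : ℕ → ℝ) (n : ℕ) (hmono : ∀ k, k < n → U k ≤ U (k+1)) :
    ∀ k, k ≤ n → U 0 ≤ U k := by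
  intro k hk
  induction k with
  | zero => exact le_rfl
  | succ k ih => exact le_trans (ih (by omega)) (hmono k (by omega))

lemma lintegral_Ioc_split (f : ℝ → ℝ≥0∞) (U : ℕ → ℝ) (n : ℕ)
    (hmono : ∀ k, k < n → U k ≤ U (k+1)) :
    ∀ k, k ≤ n → (∫⁻ t in Set.Ioc (U 0) (U k), f t)
      = ∑ i ∈ Finset.range k, ∫⁻ t in Set.Ioc (U i) (U (i+1)), f t := by
  intro k hk
  induction k with
  | zero => simp
  | succ k ih =>
    have hk' : k ≤ n := by omega
    have hUk : U 0 ≤ U k := chain_mono U n hmono k hk'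
    rw [Finset.sum_range_succ, ← ih hk']
    rw [← MeasureTheory.lintegral_union measurableSet_Ioc
      (Set.Ioc_disjoint_Ioc_of_le le_rfl)]
    rw [Set.Ioc_union_Ioc_eq_Ioc hUk (hmono k (by omega))]

lemma integral_Ioc_split (f : ℝ → ℝ) (hint : ∀ a b : ℝ, IntegrableOn f (Set.Ioc a b))
    (U : ℕ → ℝ) (n : ℕ) (hmono : ∀ k, k < n → U k ≤ U (k+1)) :
    ∀ k, k ≤ n → (∫ t in Set.Ioc (U 0) (U k), f t)
      = ∑ i ∈ Finset.range k, ∫ t in Set.Ioc (U i) (U (i+1)), f t := by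
  intro k hk
  induction k with
  | zero => simp
  | succ k ih =>
    have hk' : k ≤ n := by omega
    have hUk : U 0 ≤ U k := chain_mono U n hmono k hk'
    rw [Finset.sum_range_succ, ← ih hk']
    rw [← MeasureTheory.setIntegral_union (Set.Ioc_disjoint_Ioc_of_le le_rfl) measurableSet_Ioc
      (hint _ _) (hint _ _)]
    rw [Set.Ioc_union_Ioc_eq_Ioc hUk (hmono k (by omega))]
/-- ctime upper bound from a witness. -/
lemma ctime_le {S : Sched} {j : Job} {t : ℝ} (h1 : j.r ≤ t) (h2 : work S j t = 0) :
    ctime S j ≤ ENNReal.ofReal t := by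
  exact iInf_le_of_le t (iInf_le _ ⟨h1, h2⟩)

/-- energy over a singleton. -/
lemma energy_singleton (S : Sched) (j : Job) :
    energy {j} S = ∫⁻ t in Set.Ioi (0:ℝ), ENNReal.ofReal ((S j t)^2) := by
  unfold energy; simp

/-- Lower bound for the cost on the single-job instance of a schedule that has
completed one unit of work by time `e ≤ 1`. -/
lemma single_cost_lb (j₀ : Job) (hr₀ : j₀.r = 0) (hp₀ : j₀.p = 1) (S : Sched)
    (hf : Feasible {j₀} S) (e : ℝ) (he : 0 < e) (he1 : e ≤ 1)
    (hw : (∫ t in Set.Icc (0:ℝ) e, S j₀ t) = 1) :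
    ENNReal.ofReal (e + 1/e) ≤ cost S {j₀} := by
  obtain ⟨hm, hnn, hz, hint⟩ := hf j₀ (Finset.mem_singleton_self j₀)
  have hwork_e : work S j₀ e = 0 := by
    unfold work; rw [hr₀, hp₀, hw]; ring
  have hct_le : ctime S j₀ ≤ ENNReal.ofReal e := ctime_le (by rw [hr₀]; exact he.le) hwork_e
  have hct_ne : ctime S j₀ ≠ ⊤ := ne_top_of_le_ne_top ENNReal.ofReal_ne_top hct_le
  have hflow : flowTime S {j₀} = ctime S j₀ := by
    unfold flowTime; rw [Finset.sum_singleton, hr₀]; simp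
  apply ENNReal.le_of_forall_pos_le_add
  intro η hη _
  set δ : ℝ := (η:ℝ) / (1 + 1/e^2) with hδdef
  have hδpos : 0 < δ := by
    apply div_pos (by exact_mod_cast hη)
    positivity
  -- pick an approximate completion time t
  have hlt : ctime S j₀ < ctime S j₀ + ENNReal.ofReal δ :=
    ENNReal.lt_add_right hct_ne (by simp [ENNReal.ofReal_eq_zero]; linarith)
  have : ∃ t : ℝ, ∃ _ : j₀.r ≤ t ∧ work S j₀ t = 0,
      ENNReal.ofReal t < ctime S j₀ + ENNReal.ofReal δ := by
    have h2 := hlt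
    rw [ctime] at h2
    -- iInf < a gives a witness
    obtain ⟨t, ht⟩ := iInf_lt_iff.mp (lt_of_le_of_lt (le_of_eq rfl) h2)
    obtain ⟨ht1, ht2⟩ := iInf_lt_iff.mp ht
    exact ⟨t, ht1, ht2⟩
  obtain ⟨t, ⟨htr, htw⟩, htlt⟩ := this
  have htint : (∫ u in Set.Icc (0:ℝ) t, S j₀ u) = 1 := by
    have := htw; unfold work at this; rw [hr₀, hp₀] at this; linarith
  have ht0 : 0 ≤ t := hr₀ ▸ htr
  have htpos : 0 < t := by
    rcases eq_or_lt_of_le ht0 with h | h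
    · exfalso
      rw [← h] at htint
      rw [Set.Icc_self] at htint
      rw [MeasureTheory.Measure.restrict_singleton] at htint
      simp at htint
    · exact h
  have htle : t ≤ e + δ := by
    have : ENNReal.ofReal t < ENNReal.ofReal (e + δ) := by
      calc ENNReal.ofReal t < ctime S j₀ + ENNReal.ofReal δ := htlt
        _ ≤ ENNReal.ofReal e + ENNReal.ofReal δ := add_le_add_left hct_le _
        _ = ENNReal.ofReal (e + δ) := (ENNReal.ofReal_add he.le hδpos.le).symm
    exact ((ENNReal.ofReal_lt_ofReal_iff (by linarith)).mp this).le
  -- energy lower bound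
  have hen : ENNReal.ofReal (1/t) ≤ energy {j₀} S := by
    have h1 : (∫ u in Set.Ioc (0:ℝ) t, S j₀ u) = 1 := by
      rw [← MeasureTheory.integral_Icc_eq_integral_Ioc]; exact htint
    have := cs_bound (S j₀) hm hnn 0 t
    rw [h1, energy_singleton] at *
    calc ENNReal.ofReal (1/t) = ENNReal.ofReal ((1:ℝ)^2/(t-0)) := by norm_num
      _ ≤ ∫⁻ u in Set.Ioc (0:ℝ) t, ENNReal.ofReal ((S j₀ u)^2) := this
      _ ≤ ∫⁻ u in Set.Ioi (0:ℝ), ENNReal.ofReal ((S j₀ u)^2) :=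
          lintegral_mono_set (Set.Ioc_subset_Ioi_self)
  have hfl : ENNReal.ofReal t ≤ flowTime S {j₀} + ENNReal.ofReal δ := by
    rw [hflow]; exact htlt.le
  have key : ENNReal.ofReal (1/t + t) ≤ cost S {j₀} + ENNReal.ofReal δ := by
    rw [ENNReal.ofReal_add (by positivity) ht0]
    calc ENNReal.ofReal (1/t) + ENNReal.ofReal t
        ≤ energy {j₀} S + (flowTime S {j₀} + ENNReal.ofReal δ) := add_le_add hen hfl
      _ = cost S {j₀} + ENNReal.ofReal δ := by rw [cost]; ring
  have real_ineq : e + 1/e ≤ (1/t + t) + δ/e^2 := by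
    have := inv_add_self_bound htpos he he1 hδpos.le htle
    linarith
  calc ENNReal.ofReal (e + 1/e) ≤ ENNReal.ofReal ((1/t + t) + δ/e^2) :=
        ENNReal.ofReal_le_ofReal real_ineq
    _ ≤ ENNReal.ofReal (1/t + t) + ENNReal.ofReal (δ/e^2) := ENNReal.ofReal_add_le
    _ ≤ (cost S {j₀} + ENNReal.ofReal δ) + ENNReal.ofReal (δ/e^2) := add_le_add_left key _
    _ = cost S {j₀} + (ENNReal.ofReal δ + ENNReal.ofReal (δ/e^2)) := by ring
    _ = cost S {j₀} + ENNReal.ofReal (δ + δ/e^2) := by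
        rw [ENNReal.ofReal_add hδpos.le (by positivity)]
    _ ≤ cost S {j₀} + η := by
        apply add_le_add_right
        have : δ + δ/e^2 = (η:ℝ) := by
          rw [hδdef]; field_simp
        rw [this, ENNReal.ofReal_coe_nnreal]
/-- The optimal cost of a single unit job released at `0` is at most `2`. -/
lemma opt_single_le (j₀ : Job) (hr₀ : j₀.r = 0) (hp₀ : j₀.p = 1) : OPT {j₀} ≤ 2 := by
  set S₀ : Sched := fun _ => Set.indicator (Set.Ioc (0:ℝ) 1) (fun _ => (1:ℝ)) with hS₀
  have hIic : ∀ (a b : ℝ), (∫ t in Set.Icc a b, S₀ j₀ t)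
      = (volume (Set.Ioc (0:ℝ) 1 ∩ Set.Icc a b)).toReal := by
    intro a b
    rw [hS₀]
    simp only
    rw [MeasureTheory.setIntegral_indicator measurableSet_Ioc]
    rw [MeasureTheory.setIntegral_const, smul_eq_mul, mul_one, Set.inter_comm]
    rfl
  have hfeas : Feasible {j₀} S₀ := by
    intro j hj
    rw [Finset.mem_singleton] at hj
    subst hj
    refine ⟨(measurable_const.indicator measurableSet_Ioc), ?_, ?_, ?_⟩
    · intro t; exact Set.indicator_nonneg (fun _ _ => zero_le_one) t
    · intro t ht
      rw [hr₀] at ht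
      apply Set.indicator_of_notMem
      simp only [Set.mem_Ioc, not_and_or, not_lt]
      left; linarith
    · rw [hr₀, hS₀]
      simp only
      rw [MeasureTheory.setIntegral_indicator measurableSet_Ioc]
      rw [MeasureTheory.setIntegral_const, smul_eq_mul, mul_one]
      have hset : Set.Ici (0:ℝ) ∩ Set.Ioc 0 1 = Set.Ioc 0 1 :=
        Set.inter_eq_self_of_subset_right (fun x hx => le_of_lt hx.1)
      rw [hset, Real.volume_real_Ioc, hp₀]
      simp
  have hen : energy {j₀} S₀ ≤ 1 := by
    unfold energy
    simp only [Finset.sum_singleton]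
    have hpt : ∀ t : ℝ, ENNReal.ofReal ((S₀ j₀ t)^2)
        = Set.indicator (Set.Ioc (0:ℝ) 1) (fun _ => (1:ℝ≥0∞)) t := by
      intro t
      rw [hS₀]
      by_cases ht : t ∈ Set.Ioc (0:ℝ) 1
      · simp [Set.indicator_of_mem ht]
      · simp [Set.indicator_of_notMem ht]
    calc ∫⁻ t in Set.Ioi (0:ℝ), ENNReal.ofReal ((S₀ j₀ t)^2)
        = ∫⁻ t in Set.Ioi (0:ℝ), Set.indicator (Set.Ioc (0:ℝ) 1) (fun _ => (1:ℝ≥0∞)) t := by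
          exact lintegral_congr fun t => hpt t
      _ = volume (Set.Ioc (0:ℝ) 1 ∩ Set.Ioi 0) := by
          rw [MeasureTheory.lintegral_indicator measurableSet_Ioc, setLIntegral_const,
            one_mul, Measure.restrict_apply measurableSet_Ioc]
      _ ≤ 1 := by
          have hset : Set.Ioc (0:ℝ) 1 ∩ Set.Ioi 0 = Set.Ioc 0 1 :=
            Set.inter_eq_self_of_subset_left (fun x hx => hx.1)
          rw [hset, Real.volume_Ioc]
          simp
  have hct : ctime S₀ j₀ ≤ 1 := by
    have : work S₀ j₀ 1 = 0 := by
      unfold work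
      rw [hr₀, hp₀, hIic]
      have hset : Set.Ioc (0:ℝ) 1 ∩ Set.Icc 0 1 = Set.Ioc 0 1 :=
        Set.inter_eq_self_of_subset_left (fun x hx => ⟨le_of_lt hx.1, hx.2⟩)
      rw [hset, Real.volume_Ioc]
      norm_num
    have h := ctime_le (by rw [hr₀]; norm_num) this
    simpa using h
  have hcost : cost S₀ {j₀} ≤ 2 := by
    have hfl : flowTime S₀ {j₀} ≤ 1 := by
      unfold flowTime
      rw [Finset.sum_singleton, hr₀]
      simpa using hct
    calc cost S₀ {j₀} = energy {j₀} S₀ + flowTime S₀ {j₀} := rfl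
      _ ≤ 1 + 1 := add_le_add hen hfl
      _ = 2 := by norm_num
  calc OPT {j₀} ≤ cost S₀ {j₀} := iInf_le_of_le S₀ (iInf_le _ hfeas)
    _ ≤ 2 := hcost
noncomputable def Q (n : ℕ) : ℝ := ∑ j ∈ Finset.range n, Real.sqrt j

lemma Q_nonneg (n : ℕ) : 0 ≤ Q n :=
  Finset.sum_nonneg fun _ _ => Real.sqrt_nonneg _

lemma sqrt_reflect_sum (n : ℕ) :
    ∑ r ∈ Finset.Ico 1 n, Real.sqrt ((n:ℝ) - r) = Q n := by
  have h0 : Q n = ∑ r ∈ Finset.Ico 1 n, Real.sqrt r := by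
    unfold Q
    rw [Finset.range_eq_Ico]
    refine (Finset.sum_subset (Finset.Ico_subset_Ico (by norm_num) le_rfl) ?_).symm
    intro x hx hnx
    have : x = 0 := by
      simp only [Finset.mem_Ico] at hx hnx
      omega
    simp [this]
  rw [h0]
  apply Finset.sum_nbij' (i := fun r => n - r) (j := fun r => n - r)
  · intro a ha; simp only [Finset.mem_Ico] at *; omega
  · intro a ha; simp only [Finset.mem_Ico] at *; omega
  · intro a ha; simp only [Finset.mem_Ico] at ha; omega
  · intro a ha; simp only [Finset.mem_Ico] at ha; omega
  · intro a ha
    simp only [Finset.mem_Ico] at ha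
    congr 1
    have : (↑(n - a) : ℝ) = (n:ℝ) - a := by
      push_cast [Nat.cast_sub (by omega : a ≤ n)]; ring
    rw [this]

/-- Explicit schedule: upper bound for `OPT Jhat`. -/
lemma opt_upper (n : ℕ) (hn : 1 ≤ n) (Jhat : Finset Job) (hcard : Jhat.card = n)
    (j₀ : Job) (hmem : j₀ ∈ Jhat) (hr₀ : j₀.r = 0) (hp : ∀ j ∈ Jhat, j.p = 1)
    (hr : ∀ j ∈ Jhat, j ≠ j₀ → j.r = 1 / Real.sqrt n) :
    OPT Jhat ≤ ENNReal.ofReal (Real.sqrt n + 1/Real.sqrt n + 2 * Q n) := by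
  have hsn1 : 1 ≤ Real.sqrt n := by
    have : Real.sqrt 1 ≤ Real.sqrt n := Real.sqrt_le_sqrt (by exact_mod_cast hn)
    simpa using this
  have hsn0 : 0 < Real.sqrt n := lt_of_lt_of_le one_pos hsn1
  set ε : ℝ := 1 / Real.sqrt n with hεdef
  have hε : 0 < ε := by positivity
  -- enumeration with j₀ first
  have hn' : 0 < n := hn
  set eq0 : {x // x ∈ Jhat} ≃ Fin n := Jhat.equivFin.trans (finCongr hcard) with heq0
  set R : {x // x ∈ Jhat} ≃ Fin n := eq0.trans (Equiv.swap ⟨0, hn'⟩ (eq0 ⟨j₀, hmem⟩)) with hRdef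
  have hR0 : R ⟨j₀, hmem⟩ = ⟨0, hn'⟩ := by
    simp only [hRdef, Equiv.trans_apply]
    exact Equiv.swap_apply_right _ _
  set rk : Job → ℕ := fun j => if h : j ∈ Jhat then ((R ⟨j, h⟩ : Fin n) : ℕ) else 0 with hrkdef
  have hrk : ∀ (j) (h : j ∈ Jhat), rk j = ((R ⟨j, h⟩ : Fin n) : ℕ) := by
    intro j h; rw [hrkdef]; simp [h]
  have hrk0 : rk j₀ = 0 := by rw [hrk j₀ hmem, hR0]
  have hrklt : ∀ j ∈ Jhat, rk j < n := by
    intro j h; rw [hrk j h]; exact (R ⟨j, h⟩).2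
  have hrkinj : ∀ j ∈ Jhat, ∀ j' ∈ Jhat, rk j = rk j' → j = j' := by
    intro j h j' h' hee
    rw [hrk j h, hrk j' h'] at hee
    have : R ⟨j, h⟩ = R ⟨j', h'⟩ := Fin.ext hee
    have := R.injective this
    exact Subtype.mk_eq_mk.mp this
  have hrkpos : ∀ j ∈ Jhat, j ≠ j₀ → rk j ≠ 0 := by
    intro j h hne h0
    exact hne (hrkinj j h j₀ hmem (by rw [h0, hrk0]))
  have hrel : ∀ j ∈ Jhat, j.r = (if rk j = 0 then 0 else ε) := by
    intro j h
    by_cases hj : j = j₀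
    · subst hj; rw [hrk0, if_pos rfl, hr₀]
    · rw [if_neg (hrkpos j h hj), hr j h hj, hεdef]
  -- speeds and times
  set c : ℕ → ℝ := fun r => Real.sqrt ((n:ℝ) - r) with hcdef
  set T : ℕ → ℝ := fun r => ε + ∑ m ∈ Finset.Icc 1 r, (c m)⁻¹ with hTdef
  set Tst : ℕ → ℝ := fun r => if r = 0 then 0 else T (r-1) with hTstdef
  set len : ℕ → ℝ := fun r => if r = 0 then ε else (c r)⁻¹ with hlendef
  have hcnn : ∀ r, 0 ≤ c r := fun r => Real.sqrt_nonneg _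
  have hcpos : ∀ r, r < n → 0 < c r := by
    intro r h
    apply Real.sqrt_pos.mpr
    have : (r:ℝ) < n := by exact_mod_cast h
    linarith
  have hcsq : ∀ r, r < n → c r ^ 2 = (n:ℝ) - r := by
    intro r h
    apply Real.sq_sqrt
    have : (r:ℝ) < n := by exact_mod_cast h
    linarith
  have hc0 : c 0 = Real.sqrt n := by rw [hcdef]; norm_num
  have hclen : ∀ r, r < n → c r * len r = 1 := by
    intro r h
    simp only [hlendef]
    by_cases h0 : r = 0
    · subst h0
      simp only [if_pos rfl, if_true]
      rw [hc0, hεdef]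
      field_simp
    · rw [if_neg h0]
      exact mul_inv_cancel₀ (ne_of_gt (hcpos r h))
  have hlen_nn : ∀ r, 0 ≤ len r := by
    intro r; simp only [hlendef]
    by_cases h0 : r = 0
    · simp [h0, hε.le]
    · simp only [if_neg h0]
      exact inv_nonneg.mpr (hcnn r)
  have hT_mono : Monotone T := by
    intro a b hab
    simp only [hTdef]
    simp only [add_le_add_iff_left]
    apply Finset.sum_le_sum_of_subset_of_nonneg (Finset.Icc_subset_Icc le_rfl hab)
    intro i _ _
    exact inv_nonneg.mpr (hcnn i)
  have hT_ge : ∀ r, ε ≤ T r := by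
    intro r; simp only [hTdef]
    simp only [le_add_iff_nonneg_right]
    exact Finset.sum_nonneg fun i _ => inv_nonneg.mpr (hcnn i)
  have hTsucc : ∀ r : ℕ, T (r+1) = T r + (c (r+1))⁻¹ := by
    intro r
    simp only [hTdef]
    rw [Finset.sum_Icc_succ_top (by omega : 1 ≤ r + 1)]
    ring
  have hTT : ∀ r, T r - Tst r = len r := by
    intro r
    simp only [hTstdef, hlendef]
    by_cases h0 : r = 0
    · subst h0
      simp only [if_pos rfl]
      simp only [hTdef]; simp
    · rw [if_neg h0, if_neg h0]
      obtain ⟨m, rfl⟩ := Nat.exists_eq_succ_of_ne_zero h0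
      rw [hTsucc m]
      simp
  have hTst_nn : ∀ r, 0 ≤ Tst r := by
    intro r
    simp only [hTstdef]
    by_cases h0 : r = 0
    · simp [h0]
    · rw [if_neg h0]; exact le_trans hε.le (hT_ge _)
  have hTst_ge : ∀ r, r ≠ 0 → ε ≤ Tst r := by
    intro r h0
    simp only [hTstdef]
    rw [if_neg h0]; exact hT_ge _
  have hTst_lt : ∀ r, r < n → Tst r < T r := by
    intro r h
    have h1 := hTT r
    have h2 : 0 < len r := by
      have := hclen r h
      nlinarith [hcnn r, hlen_nn r]
    linarith
  have hIdisj : ∀ r r' : ℕ, r < r' → Disjoint (Set.Ioc (Tst r) (T r)) (Set.Ioc (Tst r') (T r')) := by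
    intro r r' hlt
    apply Set.disjoint_left.mpr
    intro t ht ht'
    have h1 : T r ≤ Tst r' := by
      have e1 : Tst r' = T (r'-1) := by simp only [hTstdef]; rw [if_neg (by omega : r' ≠ 0)]
      rw [e1]
      exact hT_mono (by omega : r ≤ r' - 1)
    exact absurd (lt_of_le_of_lt (ht.2.trans h1) ht'.1) (lt_irrefl t)
  -- the schedule
  set S₁ : Sched := fun j => Set.indicator (Set.Ioc (Tst (rk j)) (T (rk j))) (fun _ => c (rk j))
    with hS₁def
  have hind_int : ∀ (s : Set ℝ), MeasurableSet s → ∀ r, r < n →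
      Set.Ioc (Tst r) (T r) ⊆ s →
      (∫ t in s, Set.indicator (Set.Ioc (Tst r) (T r)) (fun _ => c r) t) = 1 := by
    intro s hs r hrn hsub
    rw [MeasureTheory.setIntegral_indicator measurableSet_Ioc, MeasureTheory.setIntegral_const,
      smul_eq_mul]
    have : s ∩ Set.Ioc (Tst r) (T r) = Set.Ioc (Tst r) (T r) :=
      Set.inter_eq_self_of_subset_right hsub
    rw [this, Real.volume_real_Ioc_of_le (by linarith [hTst_lt r hrn]), hTT r]
    rw [mul_comm]
    exact hclen r hrn
  have hrle : ∀ j ∈ Jhat, j.r ≤ Tst (rk j) := by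
    intro j h
    rw [hrel j h]
    by_cases h0 : rk j = 0
    · rw [if_pos h0]; exact hTst_nn _
    · rw [if_neg h0]; exact hTst_ge _ h0
  have hfeas : Feasible Jhat S₁ := by
    intro j h
    refine ⟨measurable_const.indicator measurableSet_Ioc, ?_, ?_, ?_⟩
    · intro t
      exact Set.indicator_nonneg (fun _ _ => hcnn _) t
    · intro t ht
      apply Set.indicator_of_notMem
      intro hmem'
      have := hrle j h
      exact absurd (lt_of_lt_of_le ht (this.trans hmem'.1.le)) (lt_irrefl t)
    · rw [hS₁def]
      simp only
      rw [hind_int _ measurableSet_Ici _ (hrklt j h)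
        (fun x hx => le_trans (hrle j h) hx.1.le), hp j h]
  -- energy bound
  have hofmul : ∀ r : ℕ, ENNReal.ofReal ((n:ℝ) - r) * ENNReal.ofReal (len r)
      = ENNReal.ofReal (((n:ℝ) - r) * len r) := by
    intro r
    by_cases hrn : r < n
    · rw [ENNReal.ofReal_mul (by rw [← hcsq r hrn]; positivity)]
    · have h1 : (n:ℝ) - r ≤ 0 := by
        push_neg at hrn
        have : (n:ℝ) ≤ r := by exact_mod_cast hrn
        linarith
      rw [ENNReal.ofReal_eq_zero.mpr h1, zero_mul,
        ENNReal.ofReal_eq_zero.mpr (mul_nonpos_iff.mpr (Or.inr ⟨h1, hlen_nn r⟩))]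
  have hsum_one : ∀ t (r : ℕ), r < n → t ∈ Set.Ioc (Tst r) (T r) →
      ∀ (g : ℕ → ℝ≥0∞), ∑ r' ∈ Finset.range n, Set.indicator (Set.Ioc (Tst r') (T r'))
        (fun _ => g r') t = g r := by
    intro t r hrn htr g
    rw [Finset.sum_eq_single_of_mem r (Finset.mem_range.mpr hrn)]
    · exact Set.indicator_of_mem htr _
    · intro b _ hb
      apply Set.indicator_of_notMem
      intro htb
      rcases lt_or_gt_of_ne hb with h' | h'
      · exact Set.disjoint_left.mp (hIdisj b r h') htb htr
      · exact Set.disjoint_left.mp (hIdisj r b h') htr htb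
  have hen : energy Jhat S₁ ≤ ENNReal.ofReal (Real.sqrt n + Q n) := by
    have hpt : ∀ t : ℝ, ENNReal.ofReal ((∑ j ∈ Jhat, S₁ j t) ^ 2) ≤
        ∑ r ∈ Finset.range n, Set.indicator (Set.Ioc (Tst r) (T r))
          (fun _ => ENNReal.ofReal ((n:ℝ) - r)) t := by
      intro t
      have hσ : (∑ j ∈ Jhat, S₁ j t)
          = ∑ r ∈ Finset.range n, Set.indicator (Set.Ioc (Tst r) (T r)) (fun _ => c r) t := by
        refine Finset.sum_bij' (i := fun j _ => rk j)
          (j := fun r hr => ((R.symm ⟨r, Finset.mem_range.mp hr⟩ : {x // x ∈ Jhat}) : Job))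
          ?_ ?_ ?_ ?_ ?_
        · intro a ha; exact Finset.mem_range.mpr (hrklt a ha)
        · intro a _; exact (R.symm _).2
        · intro a ha
          have h5 : R ⟨a, ha⟩ = ⟨rk a, hrklt a ha⟩ := Fin.ext (hrk a ha).symm
          have h6 := congrArg R.symm h5
          rw [Equiv.symm_apply_apply] at h6
          exact congrArg Subtype.val h6.symm
        · intro a ha
          exact (hrk _ (R.symm _).2).trans (congrArg Fin.val (R.apply_symm_apply _))
        · intro a ha; rfl
      rw [hσ]
      by_cases hcase : ∃ r, r < n ∧ t ∈ Set.Ioc (Tst r) (T r)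
      · obtain ⟨r, hrn, htr⟩ := hcase
        rw [hsum_one t r hrn htr, show (∑ r' ∈ Finset.range n,
          Set.indicator (Set.Ioc (Tst r') (T r')) (fun _ => c r') t) = c r from by
            rw [Finset.sum_eq_single_of_mem r (Finset.mem_range.mpr hrn)]
            · exact Set.indicator_of_mem htr _
            · intro b _ hb
              apply Set.indicator_of_notMem
              intro htb
              rcases lt_or_gt_of_ne hb with h' | h'
              · exact Set.disjoint_left.mp (hIdisj b r h') htb htr
              · exact Set.disjoint_left.mp (hIdisj r b h') htr htb]
        rw [hcsq r hrn]
      · push_neg at hcase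
        have hz1 : ∀ r' ∈ Finset.range n, Set.indicator (Set.Ioc (Tst r') (T r'))
            (fun _ => c r') t = 0 := fun r' hr' =>
          Set.indicator_of_notMem (hcase r' (Finset.mem_range.mp hr')) _
        rw [Finset.sum_congr rfl hz1]
        simp
    calc energy Jhat S₁
        ≤ ∫⁻ t in Set.Ioi (0:ℝ), ∑ r ∈ Finset.range n, Set.indicator (Set.Ioc (Tst r) (T r))
            (fun _ => ENNReal.ofReal ((n:ℝ) - r)) t := by
          unfold energy
          exact lintegral_mono fun t => hpt t
      _ ≤ ∑ r ∈ Finset.range n, ENNReal.ofReal (((n:ℝ) - r) * len r) := by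
          rw [MeasureTheory.lintegral_finset_sum _ (fun r _ =>
            measurable_const.indicator measurableSet_Ioc)]
          apply Finset.sum_le_sum
          intro r _
          rw [MeasureTheory.lintegral_indicator measurableSet_Ioc, setLIntegral_const,
            Measure.restrict_apply measurableSet_Ioc]
          calc ENNReal.ofReal ((n:ℝ) - r) * volume (Set.Ioc (Tst r) (T r) ∩ Set.Ioi 0)
              ≤ ENNReal.ofReal ((n:ℝ) - r) * volume (Set.Ioc (Tst r) (T r)) :=
                mul_le_mul_right (measure_mono Set.inter_subset_left) _
            _ = ENNReal.ofReal ((n:ℝ) - r) * ENNReal.ofReal (len r) := by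
                rw [Real.volume_Ioc, hTT r]
            _ = ENNReal.ofReal (((n:ℝ) - r) * len r) := hofmul r
      _ = ENNReal.ofReal (∑ r ∈ Finset.range n, ((n:ℝ) - r) * len r) := by
          rw [ENNReal.ofReal_sum_of_nonneg]
          intro r hrm
          have hrn := Finset.mem_range.mp hrm
          rw [← hcsq r hrn]
          positivity
      _ = ENNReal.ofReal (Real.sqrt n + Q n) := by
          congr 1
          have hsplit : Finset.range n = insert 0 (Finset.Ico 1 n) := by
            rw [Finset.range_eq_Ico]
            ext x
            simp only [Finset.mem_Ico, Finset.mem_insert]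
            omega
          rw [hsplit, Finset.sum_insert (by simp)]
          have h00 : ((n:ℝ) - (0:ℕ)) * len 0 = Real.sqrt n := by
            simp only [hlendef, if_pos rfl, Nat.cast_zero, sub_zero, hεdef]
            rw [← Real.div_sqrt (x := (n:ℝ))]
            field_simp
            exact Real.sq_sqrt (Nat.cast_nonneg _)
          rw [h00]
          congr 1
          rw [← sqrt_reflect_sum n]
          apply Finset.sum_congr rfl
          intro r hrm
          have h1 : 1 ≤ r ∧ r < n := by simpa using hrm
          simp only [hlendef, if_neg (by omega : r ≠ 0), hcdef]
          rw [← div_eq_mul_inv]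
          exact Real.div_sqrt
  -- flow bound
  have hflow : flowTime S₁ Jhat ≤ ENNReal.ofReal (1/Real.sqrt n + Q n) := by
    have hct : ∀ j ∈ Jhat, ctime S₁ j ≤ ENNReal.ofReal (T (rk j)) := by
      intro j h
      apply ctime_le (le_trans (hrle j h) (hTst_lt _ (hrklt j h)).le)
      unfold work
      rw [hp j h]
      have : (∫ t in Set.Icc j.r (T (rk j)), S₁ j t) = 1 := by
        rw [hS₁def]
        apply hind_int _ measurableSet_Icc _ (hrklt j h)
        intro x hx
        exact ⟨le_trans (hrle j h) hx.1.le, hx.2⟩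
      rw [this]; ring
    have hterm : ∀ j ∈ Jhat, ctime S₁ j - ENNReal.ofReal j.r
        ≤ ENNReal.ofReal (T (rk j) - j.r) := by
      intro j h
      have hrj_nn : 0 ≤ j.r := by
        rw [hrel j h]
        by_cases h0 : rk j = 0
        · simp [h0]
        · simp only [if_neg h0]; exact hε.le
      rw [ENNReal.ofReal_sub _ hrj_nn]
      exact tsub_le_tsub_right (hct j h) _
    have hsum2 : ∑ j ∈ Jhat, ENNReal.ofReal (T (rk j) - j.r)
        = ∑ r ∈ Finset.range n, ENNReal.ofReal (T r - (if r = 0 then 0 else ε)) := by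
      refine Finset.sum_bij' (i := fun j _ => rk j)
        (j := fun r hr => ((R.symm ⟨r, Finset.mem_range.mp hr⟩ : {x // x ∈ Jhat}) : Job))
        ?_ ?_ ?_ ?_ ?_
      · intro a ha; exact Finset.mem_range.mpr (hrklt a ha)
      · intro a _; exact (R.symm _).2
      · intro a ha
        have h5 : R ⟨a, ha⟩ = ⟨rk a, hrklt a ha⟩ := Fin.ext (hrk a ha).symm
        have h6 := congrArg R.symm h5
        rw [Equiv.symm_apply_apply] at h6
        exact congrArg Subtype.val h6.symm
      · intro a ha
        exact (hrk _ (R.symm _).2).trans (congrArg Fin.val (R.apply_symm_apply _))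
      · intro a ha
        rw [hrel a ha]
    have hreal : ∑ r ∈ Finset.range n, (T r - (if r = 0 then 0 else ε))
        = 1/Real.sqrt n + Q n := by
      have hsplit : Finset.range n = insert 0 (Finset.Ico 1 n) := by
        rw [Finset.range_eq_Ico]
        ext x
        simp only [Finset.mem_Ico, Finset.mem_insert]
        omega
      rw [hsplit, Finset.sum_insert (by simp)]
      have h00 : T 0 - (if (0:ℕ) = 0 then (0:ℝ) else ε) = ε := by
        simp only [if_pos rfl, sub_zero, hTdef]
        simp
      rw [h00, hεdef]
      congr 1
      have hterm2 : ∀ r ∈ Finset.Ico 1 n, T r - (if r = 0 then (0:ℝ) else ε)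
          = ∑ m ∈ Finset.Icc 1 r, (c m)⁻¹ := by
        intro r hrm
        have h1 : 1 ≤ r := (Finset.mem_Ico.mp hrm).1
        rw [if_neg (by omega : r ≠ 0)]
        simp only [hTdef]
        ring
      rw [Finset.sum_congr rfl hterm2]
      -- sum swap
      have hswap : ∑ r ∈ Finset.Ico 1 n, (∑ m ∈ Finset.Icc 1 r, (c m)⁻¹)
          = ∑ m ∈ Finset.Ico 1 n, ((n:ℝ) - m) * (c m)⁻¹ := by
        rw [Finset.sum_Ico_eq_sum_range]
        have hinner : ∀ i, (∑ m ∈ Finset.Icc 1 (1+i), (c m)⁻¹)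
            = ∑ k ∈ Finset.range (i+1), (c (1+k))⁻¹ := by
          intro i
          rw [← Finset.Ico_add_one_right_eq_Icc, Finset.sum_Ico_eq_sum_range]
          simp [Nat.add_sub_cancel_left]
          apply Finset.sum_congr
          · congr 1; omega
          · intros; rfl
        rw [Finset.sum_congr rfl (fun i _ => hinner i)]
        rw [sum_swap_tri (n-1) (fun k => (c (1+k))⁻¹)]
        rw [Finset.sum_Ico_eq_sum_range]
        apply Finset.sum_congr rfl
        intro m hm
        have hmn : m < n - 1 := Finset.mem_range.mp hm
        congr 1
        have : ((n-1:ℕ):ℝ) = (n:ℝ) - 1 := by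
          push_cast [Nat.cast_sub hn]; ring
        rw [this]
        push_cast
        ring
      rw [hswap, ← sqrt_reflect_sum n]
      apply Finset.sum_congr rfl
      intro r hrm
      have h1 : 1 ≤ r ∧ r < n := by simpa using hrm
      simp only [hcdef]
      rw [← div_eq_mul_inv]
      exact Real.div_sqrt
    calc flowTime S₁ Jhat ≤ ∑ j ∈ Jhat, ENNReal.ofReal (T (rk j) - j.r) :=
          Finset.sum_le_sum hterm
      _ = ∑ r ∈ Finset.range n, ENNReal.ofReal (T r - (if r = 0 then 0 else ε)) := hsum2
      _ = ENNReal.ofReal (∑ r ∈ Finset.range n, (T r - (if r = 0 then 0 else ε))) := by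
          rw [ENNReal.ofReal_sum_of_nonneg]
          intro r _
          have : (if r = 0 then (0:ℝ) else ε) ≤ T r := by
            by_cases h0 : r = 0
            · simp only [if_pos h0]
              exact le_trans hε.le (hT_ge r)
            · simp only [if_neg h0]
              exact hT_ge r
          linarith
      _ = ENNReal.ofReal (1/Real.sqrt n + Q n) := by rw [hreal]
  -- conclusion
  have hcost : cost S₁ Jhat ≤ ENNReal.ofReal (Real.sqrt n + 1/Real.sqrt n + 2 * Q n) := by
    calc cost S₁ Jhat = energy Jhat S₁ + flowTime S₁ Jhat := rfl
      _ ≤ ENNReal.ofReal (Real.sqrt n + Q n) + ENNReal.ofReal (1/Real.sqrt n + Q n) :=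
          add_le_add hen hflow
      _ = ENNReal.ofReal (Real.sqrt n + 1/Real.sqrt n + 2 * Q n) := by
          rw [← ENNReal.ofReal_add (add_nonneg (Real.sqrt_nonneg _) (Q_nonneg n))
            (add_nonneg (by positivity) (Q_nonneg n))]
          congr 1; ring
  exact le_trans (iInf_le_of_le S₁ (iInf_le _ hfeas)) hcost
lemma opt_lower (n : ℕ) (hn : 1 ≤ n) (Jhat : Finset Job) (hcard : Jhat.card = n)
    (j₀ : Job) (hmem : j₀ ∈ Jhat) (hr₀ : j₀.r = 0) (hp : ∀ j ∈ Jhat, j.p = 1)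
    (hr : ∀ j ∈ Jhat, j ≠ j₀ → j.r = 1 / Real.sqrt n)
    (S : Sched) (hS : Feasible Jhat S) (w : ℝ)
    (hw : (∫ t in Set.Icc (0:ℝ) (1/Real.sqrt n), S j₀ t) = w) (hw1 : w < 1)
    (hfin : cost S Jhat ≠ ⊤) :
    ENNReal.ofReal (w^2 * Real.sqrt n + 1/Real.sqrt n
      + 2*((1-w) * Real.sqrt n + Q n)) ≤ cost S Jhat := by
  have hsn1 : 1 ≤ Real.sqrt n := by
    have : Real.sqrt 1 ≤ Real.sqrt n := Real.sqrt_le_sqrt (by exact_mod_cast hn)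
    simpa using this
  have hsn0 : 0 < Real.sqrt n := lt_of_lt_of_le one_pos hsn1
  set ε : ℝ := 1 / Real.sqrt n with hεdef
  have hε : 0 < ε := by positivity
  -- basic facts about the schedule
  have hmeas : ∀ j ∈ Jhat, Measurable (S j) := fun j hj => (hS j hj).1
  have hnn : ∀ j ∈ Jhat, ∀ t, 0 ≤ S j t := fun j hj => (hS j hj).2.1
  have hz : ∀ j ∈ Jhat, ∀ t, t < j.r → S j t = 0 := fun j hj => (hS j hj).2.2.1
  have hint1 : ∀ j ∈ Jhat, (∫ t in Set.Ici j.r, S j t) = 1 := by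
    intro j hj; rw [(hS j hj).2.2.2, hp j hj]
  have hrnn : ∀ j ∈ Jhat, 0 ≤ j.r := by
    intro j hj
    by_cases hj0 : j = j₀
    · subst hj0; rw [hr₀]
    · rw [hr j hj hj0]; exact hε.le
  have hIntOn : ∀ j ∈ Jhat, ∀ s : Set ℝ, IntegrableOn (S j) s := by
    intro j hj s
    have h1 : IntegrableOn (S j) (Set.Ici j.r) := by
      by_contra hni
      have h2 := hint1 j hj
      rw [MeasureTheory.integral_undef hni] at h2
      norm_num at h2
    have h2 : IntegrableOn (S j) (Set.Iio j.r) := by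
      apply (integrableOn_congr_fun _ measurableSet_Iio).mpr (integrableOn_zero)
      intro t ht
      exact hz j hj t ht
    have h3 : IntegrableOn (S j) Set.univ := by
      rw [← Set.Iio_union_Ici (a := j.r)]
      exact h2.union h1
    exact h3.mono_set (Set.subset_univ s)
  have hw0 : 0 ≤ w := by
    rw [← hw]
    exact MeasureTheory.setIntegral_nonneg measurableSet_Icc (fun t _ => hnn j₀ hmem t)
  -- total speed
  set σ : ℝ → ℝ := fun t => ∑ j ∈ Jhat, S j t with hσdef
  have hσm : Measurable σ := Finset.measurable_sum _ (fun j hj => hmeas j hj)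
  have hσnn : ∀ t, 0 ≤ σ t := fun t => Finset.sum_nonneg (fun j hj => hnn j hj t)
  have hσint : ∀ s : Set ℝ, IntegrableOn σ s := by
    intro s
    apply MeasureTheory.integrable_finset_sum
    intro j hj
    exact hIntOn j hj s
  have hσ_ge : ∀ j ∈ Jhat, ∀ t, S j t ≤ σ t := by
    intro j hj t
    exact Finset.single_le_sum (fun j' hj' => hnn j' hj' t) hj
  -- finiteness of completion times
  have hflow_ne : flowTime S Jhat ≠ ⊤ := by
    intro h
    apply hfin
    unfold cost
    rw [h]
    simp
  have hct_ne : ∀ j ∈ Jhat, ctime S j ≠ ⊤ := by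
    intro j hj htop
    apply hflow_ne
    have h1 : ctime S j - ENNReal.ofReal j.r = ⊤ := by
      rw [ENNReal.sub_eq_top_iff]; exact ⟨htop, ENNReal.ofReal_ne_top⟩
    have h2 : (⊤:ℝ≥0∞) ≤ ∑ j' ∈ Jhat, (ctime S j' - ENNReal.ofReal j'.r) := by
      rw [← h1]
      exact Finset.single_le_sum (f := fun j' => ctime S j' - ENNReal.ofReal j'.r)
        (fun j' _ => zero_le) hj
    unfold flowTime
    exact top_le_iff.mp h2
  -- main ε-δ argument
  apply ENNReal.le_of_forall_pos_le_add
  intro η hη _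
  set δ : ℝ := (η:ℝ) / n with hδdef
  have hδ : 0 < δ := by
    apply div_pos (by exact_mod_cast hη)
    exact_mod_cast hn
  -- choose approximate completion times
  have hch : ∀ j ∈ Jhat, ∃ t : ℝ, (j.r ≤ t ∧ work S j t = 0) ∧
      ENNReal.ofReal t < ctime S j + ENNReal.ofReal δ := by
    intro j hj
    have hlt : ctime S j < ctime S j + ENNReal.ofReal δ :=
      ENNReal.lt_add_right (hct_ne j hj) (by simp [ENNReal.ofReal_eq_zero]; linarith)
    have h2 := hlt
    rw [ctime] at h2
    obtain ⟨t, ht⟩ := iInf_lt_iff.mp h2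
    obtain ⟨ht1, ht2⟩ := iInf_lt_iff.mp ht
    exact ⟨t, ht1, ht2⟩
  set τ : Job → ℝ := fun j => if h : j ∈ Jhat then (hch j h).choose else 0 with hτdef
  have hτ1 : ∀ j ∈ Jhat, j.r ≤ τ j ∧ work S j (τ j) = 0 := by
    intro j hj
    have := (hch j hj).choose_spec
    simp only [hτdef, dif_pos hj]
    exact this.1
  have hτ2 : ∀ j ∈ Jhat, ENNReal.ofReal (τ j) < ctime S j + ENNReal.ofReal δ := by
    intro j hj
    have := (hch j hj).choose_spec
    simp only [hτdef, dif_pos hj]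
    exact this.2
  have hτint : ∀ j ∈ Jhat, (∫ t in Set.Icc j.r (τ j), S j t) = 1 := by
    intro j hj
    have h1 := (hτ1 j hj).2
    unfold work at h1
    rw [hp j hj] at h1
    linarith
  -- approximate completion times are greater than ε
  have hτgt : ∀ j ∈ Jhat, ε < τ j := by
    intro j hj
    by_cases hj0 : j = j₀
    · subst hj0
      by_contra hle
      push_neg at hle
      have h1 : (∫ t in Set.Icc j.r (τ j), S j t) ≤ w := by
        rw [← hw, hr₀]
        apply MeasureTheory.setIntegral_mono_set (hIntOn j hj _)
          (Filter.Eventually.of_forall (fun t => hnn j hj t))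
        exact Filter.Eventually.of_forall (fun t ht => ⟨hr₀ ▸ ht.1, le_trans ht.2 hle⟩)
      rw [hτint j hj] at h1
      linarith
    · have heq : j.r = ε := by rw [hr j hj hj0]
      have h1 : ε ≤ τ j := heq ▸ (hτ1 j hj).1
      rcases eq_or_lt_of_le h1 with h2 | h2
      · exfalso
        have h3 := hτint j hj
        rw [heq, ← h2, Set.Icc_self, MeasureTheory.Measure.restrict_singleton] at h3
        simp at h3
      · exact h2
  -- sorted enumeration
  set E0 : {x // x ∈ Jhat} ≃ Fin n := Jhat.equivFin.trans (finCongr hcard) with hE0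
  set g : Fin n → ℝ := fun i => τ ((E0.symm i : {x // x ∈ Jhat}) : Job) with hg
  set π : Equiv.Perm (Fin n) := Tuple.sort g with hπ
  set ee : ℕ → Job := fun i => if h : i < n then ((E0.symm (π ⟨i, h⟩) : {x // x ∈ Jhat}) : Job)
    else j₀ with heedef
  have hee_mem : ∀ i, ee i ∈ Jhat := by
    intro i
    simp only [heedef]
    by_cases h : i < n
    · rw [dif_pos h]; exact (E0.symm _).2
    · rw [dif_neg h]; exact hmem
  have hee_inj : ∀ i, i < n → ∀ i', i' < n → ee i = ee i' → i = i' := by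
    intro i hi i' hi' hee
    simp only [heedef, dif_pos hi, dif_pos hi'] at hee
    have h1 : E0.symm (π ⟨i, hi⟩) = E0.symm (π ⟨i', hi'⟩) := Subtype.coe_injective hee
    have h2 := π.injective (E0.symm.injective h1)
    exact congrArg Fin.val h2
  have hee_mono : ∀ i i', i ≤ i' → i' < n → τ (ee i) ≤ τ (ee i') := by
    intro i i' hii hi'
    have hi : i < n := lt_of_le_of_lt hii hi'
    simp only [heedef, dif_pos hi, dif_pos hi']
    have := Tuple.monotone_sort g (a := ⟨i, hi⟩) (b := ⟨i', hi'⟩) (by exact hii)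
    exact this
  have hee_surj : ∀ j ∈ Jhat, ∃ i, i < n ∧ ee i = j := by
    intro j hj
    refine ⟨(π.symm (E0 ⟨j, hj⟩)).val, (π.symm (E0 ⟨j, hj⟩)).isLt, ?_⟩
    simp only [heedef, dif_pos (π.symm (E0 ⟨j, hj⟩)).isLt]
    rw [Fin.eta, Equiv.apply_symm_apply, Equiv.symm_apply_apply]
  -- breakpoints
  set U : ℕ → ℝ := fun k => if k = 0 then ε else τ (ee (k-1)) with hUdef
  have hU0 : U 0 = ε := by simp [hUdef]
  have hUsucc : ∀ i : ℕ, U (i+1) = τ (ee i) := by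
    intro i; simp [hUdef]
  have hUε : ∀ k, ε ≤ U k := by
    intro k
    by_cases h0 : k = 0
    · subst h0; rw [hU0]
    · simp only [hUdef, if_neg h0]
      exact (hτgt _ (hee_mem _)).le
  have hU_step : ∀ k, k < n → U k ≤ U (k+1) := by
    intro k hk
    rw [hUsucc]
    by_cases h0 : k = 0
    · subst h0; rw [hU0]; exact (hτgt _ (hee_mem 0)).le
    · simp only [hUdef, if_neg h0]
      exact hee_mono (k-1) k (by omega) hk
  have hU_mono : ∀ a b, a ≤ b → b ≤ n → U a ≤ U b := by
    intro a b hab hbn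
    induction b with
    | zero => interval_cases a; exact le_rfl
    | succ b ih =>
      rcases Nat.lt_or_ge a (b+1) with h | h
      · exact le_trans (ih (by omega) (by omega)) (hU_step b (by omega))
      · have : a = b + 1 := by omega
        subst this; exact le_rfl
  -- interval data
  set d : ℕ → ℝ := fun i => U (i+1) - U i with hd
  set wi : ℕ → ℝ := fun i => ∫ t in Set.Ioc (U i) (U (i+1)), σ t with hwi
  set Ei : ℕ → ℝ≥0∞ := fun i => ∫⁻ t in Set.Ioc (U i) (U (i+1)), ENNReal.ofReal (σ t ^ 2)
    with hEi
  set ci : ℕ → ℝ := fun i => Real.sqrt ((n:ℝ) - i) with hci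
  set vi : ℕ → ℝ := fun i => if i = 0 then 1 - w else 1 with hvi
  have hd_nn : ∀ i, i < n → 0 ≤ d i := by
    intro i hi; simp only [hd, sub_nonneg]; exact hU_step i hi
  have hwi_nn : ∀ i, 0 ≤ wi i := by
    intro i
    exact MeasureTheory.setIntegral_nonneg measurableSet_Ioc (fun t _ => hσnn t)
  have hwi0 : ∀ i, d i = 0 → wi i = 0 := by
    intro i hdi
    have : U (i+1) = U i := by simp only [hd] at hdi; linarith
    simp only [hwi, this, Set.Ioc_self, MeasureTheory.Measure.restrict_empty,
      MeasureTheory.integral_zero_measure]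
  -- energy splitting
  have hEn_split : (∫⁻ t in Set.Ioc ε (U n), ENNReal.ofReal (σ t ^ 2))
      = ∑ i ∈ Finset.range n, Ei i := by
    have := lintegral_Ioc_split (fun t => ENNReal.ofReal (σ t ^ 2)) U n hU_step n le_rfl
    rw [hU0] at this
    exact this
  have hEn_ge : (∫⁻ t in Set.Ioc 0 ε, ENNReal.ofReal (σ t ^ 2))
      + ∑ i ∈ Finset.range n, Ei i ≤ energy Jhat S := by
    rw [← hEn_split]
    rw [← MeasureTheory.lintegral_union measurableSet_Ioc (Set.Ioc_disjoint_Ioc_of_le le_rfl)]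
    rw [Set.Ioc_union_Ioc_eq_Ioc hε.le (hUε n)]
    unfold energy
    exact lintegral_mono_set (fun t ht => ht.1)
  -- lower bound on the energy before ε
  have hpre : ENNReal.ofReal (w^2 * Real.sqrt n)
      ≤ ∫⁻ t in Set.Ioc 0 ε, ENNReal.ofReal (σ t ^ 2) := by
    have h1 : (∫ t in Set.Ioc (0:ℝ) ε, S j₀ t) = w := by
      rw [← MeasureTheory.integral_Icc_eq_integral_Ioc, hw]
    have h2 := cs_bound (S j₀) (hmeas j₀ hmem) (hnn j₀ hmem) 0 ε
    rw [h1, sub_zero] at h2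
    have h3 : w^2/ε = w^2 * Real.sqrt n := by
      rw [hεdef]
      field_simp
    rw [h3] at h2
    refine le_trans h2 (lintegral_mono fun t => ?_)
    apply ENNReal.ofReal_le_ofReal
    have := hσ_ge j₀ hmem t
    nlinarith [hnn j₀ hmem t, hσnn t]
  -- prefix work bound
  have hWk : ∀ k, k ≤ n → (∫ t in Set.Ioc ε (U k), σ t)
      = ∑ m ∈ Finset.range k, wi m := by
    intro k hk
    have := integral_Ioc_split σ (fun a b => hσint _) U n hU_step k hk
    rw [hU0] at this
    exact this
  have hrem : ∀ j ∈ Jhat, (∫ t in Set.Ioc ε (τ j), S j t)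
      = if j = j₀ then 1 - w else 1 := by
    intro j hj
    by_cases hj0 : j = j₀
    · subst hj0
      rw [if_pos rfl]
      have hτj : ε ≤ τ j := (hτgt j hj).le
      have hsplit : Set.Icc (0:ℝ) (τ j) = Set.Icc 0 ε ∪ Set.Ioc ε (τ j) :=
        (Set.Icc_union_Ioc_eq_Icc hε.le hτj).symm
      have h1 := hτint j hj
      rw [hr₀] at h1
      rw [hsplit] at h1
      rw [MeasureTheory.setIntegral_union (by
          apply Set.disjoint_left.mpr
          intro t ht ht'
          exact absurd (lt_of_le_of_lt ht.2 ht'.1) (lt_irrefl t)) measurableSet_Ioc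
        (hIntOn j hj _) (hIntOn j hj _)] at h1
      rw [hw] at h1
      linarith
    · rw [if_neg hj0]
      have h1 := hτint j hj
      rw [hr j hj hj0] at h1
      rw [← MeasureTheory.integral_Icc_eq_integral_Ioc]
      exact h1
  have hv_sum : ∀ k : ℕ, ∑ m ∈ Finset.range (k+1), vi m = (1 - w) + k := by
    intro k
    induction k with
    | zero => simp [hvi]
    | succ k ih =>
      rw [Finset.sum_range_succ, ih]
      simp only [hvi, if_neg (Nat.succ_ne_zero k)]
      push_cast
      ring
  have hprefix : ∀ k, k < n → ∑ m ∈ Finset.range (k+1), vi m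
      ≤ ∑ m ∈ Finset.range (k+1), wi m := by
    intro k hk
    rw [hv_sum k, ← hWk (k+1) (by omega)]
    -- the integral over (ε, U (k+1)] of σ is at least (1-w) + k
    have hstep1 : (∫ t in Set.Ioc ε (U (k+1)), σ t)
        = ∑ j ∈ Jhat, ∫ t in Set.Ioc ε (U (k+1)), S j t := by
      simp only [hσdef]
      exact MeasureTheory.integral_finset_sum _ (fun j hj => hIntOn j hj _)
    have himgsub : (Finset.range (k+1)).image ee ⊆ Jhat := by
      intro x hx
      obtain ⟨m, _, rfl⟩ := Finset.mem_image.mp hx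
      exact hee_mem m
    have hstep2 : ∑ j ∈ (Finset.range (k+1)).image ee, (∫ t in Set.Ioc ε (U (k+1)), S j t)
        ≤ ∑ j ∈ Jhat, ∫ t in Set.Ioc ε (U (k+1)), S j t := by
      apply Finset.sum_le_sum_of_subset_of_nonneg himgsub
      intro j hj _
      exact MeasureTheory.setIntegral_nonneg measurableSet_Ioc (fun t _ => hnn j hj t)
    have hstep3 : ∑ j ∈ (Finset.range (k+1)).image ee, (∫ t in Set.Ioc ε (U (k+1)), S j t)
        = ∑ m ∈ Finset.range (k+1), (∫ t in Set.Ioc ε (U (k+1)), S (ee m) t) := by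
      rw [Finset.sum_image]
      intro x hx y hy hxy
      exact hee_inj x (by
        have := Finset.mem_range.mp hx; omega) y (by
        have := Finset.mem_range.mp hy; omega) hxy
    have hstep4 : ∀ m, m < k+1 → (∫ t in Set.Ioc ε (τ (ee m)), S (ee m) t)
        ≤ ∫ t in Set.Ioc ε (U (k+1)), S (ee m) t := by
      intro m hm
      apply MeasureTheory.setIntegral_mono_set (hIntOn _ (hee_mem m) _)
        (Filter.Eventually.of_forall (fun t => hnn _ (hee_mem m) t))
      apply Filter.Eventually.of_forall
      intro t ht
      refine ⟨ht.1, le_trans ht.2 ?_⟩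
      rw [← hUsucc m]
      exact hU_mono (m+1) (k+1) (by omega) (by omega)
    have hstep5 : (1 - w) + (k:ℝ)
        ≤ ∑ m ∈ Finset.range (k+1), (∫ t in Set.Ioc ε (τ (ee m)), S (ee m) t) := by
      have hval : ∀ m ∈ Finset.range (k+1), (∫ t in Set.Ioc ε (τ (ee m)), S (ee m) t)
          = if ee m = j₀ then 1 - w else 1 := by
        intro m _
        exact hrem (ee m) (hee_mem m)
      rw [Finset.sum_congr rfl hval]
      by_cases hex : ∃ m ∈ Finset.range (k+1), ee m = j₀
      · obtain ⟨m0, hm0, hm0e⟩ := hex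
        rw [← Finset.sum_erase_add _ _ hm0, hm0e, if_pos rfl]
        have hrest : ∀ m ∈ (Finset.range (k+1)).erase m0,
            (if ee m = j₀ then 1 - w else (1:ℝ)) = 1 := by
          intro m hm
          rw [if_neg]
          intro he
          have hm' := Finset.mem_of_mem_erase hm
          have h1 := hee_inj m (by have := Finset.mem_range.mp hm'; omega) m0
            (by have := Finset.mem_range.mp hm0; omega) (he.trans hm0e.symm)
          exact (Finset.ne_of_mem_erase hm) h1
        rw [Finset.sum_congr rfl hrest, Finset.sum_const, Finset.card_erase_of_mem hm0,
          Finset.card_range]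
        simp
        ring_nf
        norm_num
      · push_neg at hex
        have hall : ∀ m ∈ Finset.range (k+1), (if ee m = j₀ then 1 - w else (1:ℝ)) = 1 := by
          intro m hm
          rw [if_neg (hex m hm)]
        rw [Finset.sum_congr rfl hall, Finset.sum_const, Finset.card_range]
        simp
        linarith
    calc (1 - w) + (k:ℝ)
        ≤ ∑ m ∈ Finset.range (k+1), (∫ t in Set.Ioc ε (τ (ee m)), S (ee m) t) := hstep5
      _ ≤ ∑ m ∈ Finset.range (k+1), (∫ t in Set.Ioc ε (U (k+1)), S (ee m) t) :=
          Finset.sum_le_sum (fun m hm => hstep4 m (Finset.mem_range.mp hm))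
      _ = ∑ j ∈ (Finset.range (k+1)).image ee, (∫ t in Set.Ioc ε (U (k+1)), S j t) :=
          hstep3.symm
      _ ≤ ∑ j ∈ Jhat, ∫ t in Set.Ioc ε (U (k+1)), S j t := hstep2
      _ = ∫ t in Set.Ioc ε (U (k+1)), σ t := hstep1.symm
  -- per-interval AM-GM
  have hper : ∀ i, i < n → ENNReal.ofReal (2 * ci i * wi i)
      ≤ ENNReal.ofReal (((n:ℝ) - i) * d i) + Ei i := by
    intro i hi
    have hcs := cs_bound σ hσm hσnn (U i) (U (i+1))
    have hreal : 2 * ci i * wi i ≤ ((n:ℝ) - i) * d i + wi i^2 / d i := by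
      have hk : (0:ℝ) ≤ (n:ℝ) - i := by
        have : (i:ℝ) < n := by exact_mod_cast hi
        linarith
      exact amgm_bound hk (hd_nn i hi) (hwi_nn i) (hwi0 i) le_rfl
    calc ENNReal.ofReal (2 * ci i * wi i)
        ≤ ENNReal.ofReal (((n:ℝ) - i) * d i + wi i^2 / d i) :=
          ENNReal.ofReal_le_ofReal hreal
      _ ≤ ENNReal.ofReal (((n:ℝ) - i) * d i) + ENNReal.ofReal (wi i^2 / d i) :=
          ENNReal.ofReal_add_le
      _ ≤ ENNReal.ofReal (((n:ℝ) - i) * d i) + Ei i := by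
          apply add_le_add_right
          simp only [hwi, hEi, hd]
          exact hcs
  -- Abel summation
  have hAbel : ∑ i ∈ Finset.range n, ci i * vi i ≤ ∑ i ∈ Finset.range n, ci i * wi i := by
    apply abel_ineq n ci wi vi
    · intro i j hij
      simp only [hci]
      apply Real.sqrt_le_sqrt
      have : (i:ℝ) ≤ j := by exact_mod_cast hij
      linarith
    · intro i _; exact Real.sqrt_nonneg _
    · exact hprefix
  have hcv : ∑ i ∈ Finset.range n, ci i * vi i = (1-w) * Real.sqrt n + Q n := by
    have hsplit : Finset.range n = insert 0 (Finset.Ico 1 n) := by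
      rw [Finset.range_eq_Ico]
      ext x
      simp only [Finset.mem_Ico, Finset.mem_insert]
      omega
    rw [hsplit, Finset.sum_insert (by simp)]
    have h00 : ci 0 * vi 0 = Real.sqrt n * (1 - w) := by
      simp [hci, hvi]
    rw [h00]
    have hrest : ∀ i ∈ Finset.Ico 1 n, ci i * vi i = Real.sqrt ((n:ℝ) - i) := by
      intro i hi
      have h1 : i ≠ 0 := by
        have := (Finset.mem_Ico.mp hi).1; omega
      simp [hci, hvi, if_neg h1]
    rw [Finset.sum_congr rfl hrest, sqrt_reflect_sum n]
    ring
  -- flow bound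
  have hflow_ge : ENNReal.ofReal ((∑ j ∈ Jhat, (τ j - j.r)) - n * δ) ≤ flowTime S Jhat := by
    have hperj : ∀ j ∈ Jhat, ENNReal.ofReal (τ j - j.r - δ)
        ≤ ctime S j - ENNReal.ofReal j.r := by
      intro j hj
      have h1 : ENNReal.ofReal (τ j) - ENNReal.ofReal δ ≤ ctime S j :=
        tsub_le_iff_right.mpr (hτ2 j hj).le
      calc ENNReal.ofReal (τ j - j.r - δ)
          = ENNReal.ofReal ((τ j - δ) - j.r) := by ring_nf
        _ = ENNReal.ofReal (τ j - δ) - ENNReal.ofReal j.r :=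
            ENNReal.ofReal_sub _ (hrnn j hj)
        _ = (ENNReal.ofReal (τ j) - ENNReal.ofReal δ) - ENNReal.ofReal j.r := by
            rw [ENNReal.ofReal_sub _ hδ.le]
        _ ≤ ctime S j - ENNReal.ofReal j.r := tsub_le_tsub_right h1 _
    calc ENNReal.ofReal ((∑ j ∈ Jhat, (τ j - j.r)) - n * δ)
        = ENNReal.ofReal (∑ j ∈ Jhat, (τ j - j.r - δ)) := by
          congr 1
          rw [show (∑ j ∈ Jhat, (τ j - j.r - δ))
              = (∑ j ∈ Jhat, (τ j - j.r)) - ∑ _j ∈ Jhat, δ from Finset.sum_sub_distrib _ _,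
            Finset.sum_const, hcard]
          push_cast
          ring
      _ ≤ ∑ j ∈ Jhat, ENNReal.ofReal (τ j - j.r - δ) := ofReal_sum_le _ _
      _ ≤ ∑ j ∈ Jhat, (ctime S j - ENNReal.ofReal j.r) := Finset.sum_le_sum hperj
      _ = flowTime S Jhat := rfl
  have hflow_real : ∑ j ∈ Jhat, (τ j - j.r)
      = ε + ∑ i ∈ Finset.range n, ((n:ℝ) - i) * d i := by
    have h1 : ∑ j ∈ Jhat, (τ j - j.r) = (∑ j ∈ Jhat, (τ j - ε)) + ∑ j ∈ Jhat, (ε - j.r) := by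
      rw [← Finset.sum_add_distrib]
      apply Finset.sum_congr rfl
      intro j _
      ring
    have h2 : ∑ j ∈ Jhat, (ε - j.r) = ε := by
      rw [Finset.sum_eq_single_of_mem j₀ hmem]
      · rw [hr₀]; ring
      · intro j hj hne
        rw [hr j hj hne]
        ring
    have h3 : ∑ j ∈ Jhat, (τ j - ε) = ∑ i ∈ Finset.range n, (τ (ee i) - ε) := by
      refine Finset.sum_bij' (i := fun j hj => ((π.symm (E0 ⟨j, hj⟩)).val : ℕ))
        (j := fun i hi => ee i) ?_ ?_ ?_ ?_ ?_
      · intro a ha; exact Finset.mem_range.mpr (π.symm (E0 ⟨a, ha⟩)).isLt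
      · intro a _; exact hee_mem a
      · intro a ha
        simp only [heedef, dif_pos (π.symm (E0 ⟨a, ha⟩)).isLt]
        rw [Fin.eta, Equiv.apply_symm_apply, Equiv.symm_apply_apply]
      · intro a ha
        have han := Finset.mem_range.mp ha
        simp only [heedef, dif_pos han]
        have : (⟨((E0.symm (π ⟨a, han⟩) : {x // x ∈ Jhat}) : Job), (E0.symm (π ⟨a, han⟩)).2⟩ :
            {x // x ∈ Jhat}) = E0.symm (π ⟨a, han⟩) := rfl
        rw [this, Equiv.apply_symm_apply, Equiv.symm_apply_apply]
      · intro a ha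
        congr 2
        simp only [heedef, dif_pos (π.symm (E0 ⟨a, ha⟩)).isLt]
        rw [Fin.eta, Equiv.apply_symm_apply, Equiv.symm_apply_apply]
    have h4 : ∑ i ∈ Finset.range n, (τ (ee i) - ε)
        = ∑ i ∈ Finset.range n, (∑ m ∈ Finset.range (i+1), d m) := by
      apply Finset.sum_congr rfl
      intro i _
      rw [Finset.sum_range_sub (f := U) (n := i+1), hUsucc i, hU0]
    rw [h1, h2, h3, h4, sum_swap_tri n d]
    ring
  -- final assembly
  have hδn : ENNReal.ofReal ((n:ℝ) * δ) = (η : ℝ≥0∞) := by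
    rw [hδdef]
    have hn0 : (n:ℝ) ≠ 0 := by
      have : (0:ℝ) < n := by exact_mod_cast hn
      linarith
    rw [mul_div_cancel₀ _ hn0, ENNReal.ofReal_coe_nnreal]
  set P : ℝ := ∑ i ∈ Finset.range n, ((n:ℝ) - i) * d i with hP
  have hP_nn : 0 ≤ P := by
    apply Finset.sum_nonneg
    intro i hi
    have hin := Finset.mem_range.mp hi
    apply mul_nonneg _ (hd_nn i hin)
    have : (i:ℝ) < n := by exact_mod_cast hin
    linarith
  have hchain1 : ENNReal.ofReal (2*((1-w) * Real.sqrt n + Q n))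
      ≤ ENNReal.ofReal P + ∑ i ∈ Finset.range n, Ei i := by
    calc ENNReal.ofReal (2*((1-w) * Real.sqrt n + Q n))
        = ENNReal.ofReal (2 * ∑ i ∈ Finset.range n, ci i * vi i) := by rw [hcv]
      _ ≤ ENNReal.ofReal (2 * ∑ i ∈ Finset.range n, ci i * wi i) := by
          apply ENNReal.ofReal_le_ofReal
          linarith [hAbel]
      _ = ENNReal.ofReal (∑ i ∈ Finset.range n, 2 * ci i * wi i) := by
          rw [Finset.mul_sum]
          congr 1
          apply Finset.sum_congr rfl
          intro i _
          ring
      _ ≤ ∑ i ∈ Finset.range n, ENNReal.ofReal (2 * ci i * wi i) := ofReal_sum_le _ _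
      _ ≤ ∑ i ∈ Finset.range n, (ENNReal.ofReal (((n:ℝ) - i) * d i) + Ei i) :=
          Finset.sum_le_sum (fun i hi => hper i (Finset.mem_range.mp hi))
      _ = (∑ i ∈ Finset.range n, ENNReal.ofReal (((n:ℝ) - i) * d i))
            + ∑ i ∈ Finset.range n, Ei i := Finset.sum_add_distrib
      _ = ENNReal.ofReal P + ∑ i ∈ Finset.range n, Ei i := by
          rw [hP, ENNReal.ofReal_sum_of_nonneg]
          intro i hi
          have hin := Finset.mem_range.mp hi
          apply mul_nonneg _ (hd_nn i hin)
          have : (i:ℝ) < n := by exact_mod_cast hin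
          linarith
  have hchain2 : ENNReal.ofReal ε + ENNReal.ofReal P ≤ flowTime S Jhat + ↑η := by
    calc ENNReal.ofReal ε + ENNReal.ofReal P
        = ENNReal.ofReal (ε + P) := (ENNReal.ofReal_add hε.le hP_nn).symm
      _ = ENNReal.ofReal (∑ j ∈ Jhat, (τ j - j.r)) := by rw [hflow_real]
      _ = ENNReal.ofReal ((∑ j ∈ Jhat, (τ j - j.r) - n * δ) + n * δ) := by congr 1; ring
      _ ≤ ENNReal.ofReal (∑ j ∈ Jhat, (τ j - j.r) - n * δ) + ENNReal.ofReal (n * δ) :=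
          ENNReal.ofReal_add_le
      _ ≤ flowTime S Jhat + ↑η := by
          rw [hδn]
          exact add_le_add_left hflow_ge _
  calc ENNReal.ofReal (w^2 * Real.sqrt n + 1/Real.sqrt n + 2*((1-w) * Real.sqrt n + Q n))
      ≤ ENNReal.ofReal (w^2 * Real.sqrt n + 1/Real.sqrt n)
        + ENNReal.ofReal (2*((1-w) * Real.sqrt n + Q n)) := ENNReal.ofReal_add_le
    _ ≤ (ENNReal.ofReal (w^2 * Real.sqrt n) + ENNReal.ofReal (1/Real.sqrt n))
        + (ENNReal.ofReal P + ∑ i ∈ Finset.range n, Ei i) :=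
        add_le_add ENNReal.ofReal_add_le hchain1
    _ = ((ENNReal.ofReal (w^2 * Real.sqrt n) + ∑ i ∈ Finset.range n, Ei i)
        + (ENNReal.ofReal ε + ENNReal.ofReal P)) := by
        rw [hεdef]
        ring
    _ ≤ ((∫⁻ t in Set.Ioc 0 ε, ENNReal.ofReal (σ t ^ 2)) + ∑ i ∈ Finset.range n, Ei i)
        + (flowTime S Jhat + ↑η) :=
        add_le_add (add_le_add_left hpre _) hchain2
    _ ≤ energy Jhat S + (flowTime S Jhat + ↑η) := add_le_add_left hEn_ge _
    _ = cost S Jhat + ↑η := by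
        unfold cost
        ring

/-- **Proposition B.1.** Let `Ĵ_n` consist of `n` unit jobs, one released at
time `0` and the other `n − 1` released at time `1/√n`, and let `𝒥' = {j₀}` be
the single unit job released at time `0`. Every non-anticipatory deterministic
algorithm with predictions that is exactly optimal when the prediction `Ĵ_n` is
correct must pay at least `((√n + 1/√n)/2)·OPT(𝒥')` on `𝒥'`. -/
theorem no_one_consistent_algorithm_is_robust (n : ℕ) (hn : 1 ≤ n)
    (Jhat : Finset Job) (hval : ValidInstance Jhat) (hcard : Jhat.card = n)
    (j₀ : Job) (hmem : j₀ ∈ Jhat) (hr₀ : j₀.r = 0)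
    (hp : ∀ j ∈ Jhat, j.p = 1)
    (hr : ∀ j ∈ Jhat, j ≠ j₀ → j.r = 1 / Real.sqrt n)
    (A : AlgP) (hfeas : AlgFeasible A) (hna : NonAnticipatory A)
    (hconsistent : cost (A Jhat Jhat) Jhat = OPT Jhat) :
    ENNReal.ofReal ((Real.sqrt n + 1 / Real.sqrt n) / 2) * OPT {j₀} ≤
      cost (A Jhat {j₀}) {j₀} := by
  have hsn1 : 1 ≤ Real.sqrt n := by
    have : Real.sqrt 1 ≤ Real.sqrt n := Real.sqrt_le_sqrt (by exact_mod_cast hn)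
    simpa using this
  have hsn0 : 0 < Real.sqrt n := lt_of_lt_of_le one_pos hsn1
  set ε : ℝ := 1 / Real.sqrt n with hεdef
  have hε : 0 < ε := by positivity
  have hε1 : ε ≤ 1 := by
    rw [hεdef, div_le_one hsn0]
    exact hsn1
  have hp₀ : j₀.p = 1 := hp j₀ hmem
  set S : Sched := A Jhat Jhat with hSdef
  have hSfeas : Feasible Jhat S := hfeas Jhat Jhat
  set w : ℝ := ∫ t in Set.Icc (0:ℝ) ε, S j₀ t with hwdef
  have hup := opt_upper n hn Jhat hcard j₀ hmem hr₀ hp hr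
  have hfin : cost S Jhat ≠ ⊤ := by
    rw [hconsistent]
    exact ne_top_of_le_ne_top ENNReal.ofReal_ne_top hup
  -- w = 1
  have hw_ge : (1:ℝ) ≤ w := by
    by_contra hlt
    push_neg at hlt
    have hlow := opt_lower n hn Jhat hcard j₀ hmem hr₀ hp hr S hSfeas w rfl hlt hfin
    rw [hconsistent] at hlow
    have hcomb := le_trans hlow hup
    have hQ := Q_nonneg n
    have h1e : (0:ℝ) < 1 / Real.sqrt n := by positivity
    rw [ENNReal.ofReal_le_ofReal_iff (by linarith)] at hcomb
    nlinarith [sq_nonneg (1 - w)]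
  have hw_le : w ≤ 1 := by
    have hIci : IntegrableOn (S j₀) (Set.Ici (0:ℝ)) := by
      by_contra hni
      have h2 := (hSfeas j₀ hmem).2.2.2
      rw [hr₀] at h2
      rw [MeasureTheory.integral_undef hni] at h2
      rw [hp₀] at h2
      norm_num at h2
    have h1 : w ≤ ∫ t in Set.Ici (0:ℝ), S j₀ t := by
      rw [hwdef]
      apply MeasureTheory.setIntegral_mono_set hIci
        (Filter.Eventually.of_forall (fun t => (hSfeas j₀ hmem).2.1 t))
        (Filter.Eventually.of_forall (fun t ht => ht.1))
    have h2 := (hSfeas j₀ hmem).2.2.2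
    rw [hr₀, hp₀] at h2
    linarith
  have hw1 : w = 1 := le_antisymm hw_le hw_ge
  -- non-anticipation transfer
  have hrestrict : ∀ u : ℝ, 0 ≤ u → u < ε → restrictLE Jhat u = restrictLE {j₀} u := by
    intro u h0 hu
    unfold restrictLE
    ext j
    simp only [Finset.mem_filter, Finset.mem_singleton]
    constructor
    · rintro ⟨hj, hrj⟩
      refine ⟨?_, hrj⟩
      by_contra hne
      rw [hr j hj hne] at hrj
      linarith
    · rintro ⟨rfl, hrj⟩
      exact ⟨hmem, hrj⟩
  have hagree : ∀ u : ℝ, 0 ≤ u → u < ε → S j₀ u = A Jhat {j₀} j₀ u := by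
    intro u h0 hu
    apply hna Jhat Jhat {j₀} u (hrestrict u h0 hu) j₀ _ u le_rfl
    unfold restrictLE
    simp only [Finset.mem_filter]
    exact ⟨hmem, by rw [hr₀]; exact h0⟩
  have hw' : (∫ t in Set.Icc (0:ℝ) ε, A Jhat {j₀} j₀ t) = 1 := by
    rw [← hw1, hwdef]
    apply MeasureTheory.setIntegral_congr_ae measurableSet_Icc
    have hae : ∀ᵐ t : ℝ, t ≠ ε := by
      rw [MeasureTheory.ae_iff]
      have : {t : ℝ | ¬ t ≠ ε} = {ε} := by
        ext t; simp
      rw [this]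
      exact measure_singleton ε
    filter_upwards [hae] with t htne ht
    exact (hagree t ht.1 (lt_of_le_of_ne ht.2 htne)).symm
  have hB := single_cost_lb j₀ hr₀ hp₀ (A Jhat {j₀}) (hfeas Jhat {j₀}) ε hε hε1 hw'
  have hA := opt_single_le j₀ hr₀ hp₀
  calc ENNReal.ofReal ((Real.sqrt n + 1 / Real.sqrt n) / 2) * OPT {j₀}
      ≤ ENNReal.ofReal ((Real.sqrt n + 1 / Real.sqrt n) / 2) * 2 := mul_le_mul_right hA _
    _ = ENNReal.ofReal (ε + 1/ε) := by
        rw [show (2:ℝ≥0∞) = ENNReal.ofReal 2 by norm_num,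
          ← ENNReal.ofReal_mul (by positivity)]
        congr 1
        rw [hεdef, one_div_one_div]
        field_simp
        ring
    _ ≤ cost (A Jhat {j₀}) {j₀} := hB
end

section
/- Consider the energy plus flow time objective with α = 2, and let 𝒦 be an instance of n unit-work jobs (p_j = 1) all released at the same time t ≥ 0. Then (4/3)·n^{3/2} ≤ OPT(𝒦) ≤ (4/3)·((n+1)^{3/2} − 1); in particular OPT(𝒦) = (4/3)·n^{3/2} + o(n^{3/2}). -/
/-! STATEMENT 9 (Lemma B.3): optimal energy plus flow time cost (α = 2) of n unit jobs released simultaneously. -/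

open MeasureTheory Finset
open scoped ENNReal BigOperators Classical

section Arith
open Finset
-- sqrt sum bounds
lemma rpow32 (x : ℝ) (hx : 0 ≤ x) : x ^ ((3:ℝ)/2) = (Real.sqrt x)^(3:ℕ) := by
  rw [Real.sqrt_eq_rpow, ← Real.rpow_natCast (x ^ ((1:ℝ)/2)) 3, ← Real.rpow_mul hx]
  norm_num

lemma sqrt_lb (k : ℕ) : (2/3) * (((k+1:ℕ):ℝ) ^ ((3:ℝ)/2) - ((k:ℕ):ℝ) ^ ((3:ℝ)/2)) ≤ Real.sqrt (k+1) := by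
  have h1 : ((k:ℝ)+1) ^ ((3:ℝ)/2) = (Real.sqrt (k+1))^(3:ℕ) := by
    have := rpow32 ((k:ℝ)+1) (by positivity); simpa using this
  have h2 : ((k:ℝ)) ^ ((3:ℝ)/2) = (Real.sqrt k)^(3:ℕ) := rpow32 _ (by positivity)
  set a := Real.sqrt ((k:ℝ)+1)
  set b := Real.sqrt (k:ℝ)
  have ha : a^2 = (k:ℝ)+1 := Real.sq_sqrt (by positivity)
  have hb : b^2 = (k:ℝ) := Real.sq_sqrt (by positivity)
  have hb0 : 0 ≤ b := Real.sqrt_nonneg _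
  have hab : b ≤ a := Real.sqrt_le_sqrt (by linarith)
  push_cast
  rw [h1, h2]
  nlinarith [sq_nonneg (a-b), sq_nonneg (a+b)]

lemma sqrt_ub (k : ℕ) : Real.sqrt (k+1) ≤ (2/3) * (((k+2:ℕ):ℝ) ^ ((3:ℝ)/2) - ((k+1:ℕ):ℝ) ^ ((3:ℝ)/2)) := by
  have h1 : ((k:ℝ)+2) ^ ((3:ℝ)/2) = (Real.sqrt ((k:ℝ)+2))^(3:ℕ) := rpow32 _ (by positivity)
  have h2 : ((k:ℝ)+1) ^ ((3:ℝ)/2) = (Real.sqrt ((k:ℝ)+1))^(3:ℕ) := rpow32 _ (by positivity)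
  set a := Real.sqrt ((k:ℝ)+2)
  set b := Real.sqrt ((k:ℝ)+1)
  have ha : a^2 = (k:ℝ)+2 := Real.sq_sqrt (by positivity)
  have hb : b^2 = (k:ℝ)+1 := Real.sq_sqrt (by positivity)
  have hb0 : 0 ≤ b := Real.sqrt_nonneg _
  have hab : b ≤ a := Real.sqrt_le_sqrt (by linarith)
  have : Real.sqrt ((k:ℕ)+1:ℝ) = b := by push_cast; rfl
  push_cast
  rw [h1, h2]
  nlinarith [sq_nonneg (a-b), sq_nonneg (a+b)]

lemma sum_sqrt_lb (n : ℕ) : (2/3) * ((n:ℝ) ^ ((3:ℝ)/2)) ≤ ∑ k ∈ range n, Real.sqrt (k+1) := by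
  have tel : ∑ k ∈ range n, ((((k+1:ℕ):ℝ)) ^ ((3:ℝ)/2) - (((k:ℕ):ℝ)) ^ ((3:ℝ)/2)) = ((n:ℝ)) ^ ((3:ℝ)/2) - ((0:ℕ):ℝ) ^ ((3:ℝ)/2) :=
    Finset.sum_range_sub (fun k => (((k:ℕ):ℝ)) ^ ((3:ℝ)/2)) n
  have h0 : ((0:ℕ):ℝ) ^ ((3:ℝ)/2) = 0 := by norm_num [Real.zero_rpow]
  calc (2/3) * ((n:ℝ) ^ ((3:ℝ)/2)) = ∑ k ∈ range n, (2/3) * ((((k+1:ℕ):ℝ)) ^ ((3:ℝ)/2) - (((k:ℕ):ℝ)) ^ ((3:ℝ)/2)) := by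
        rw [← Finset.mul_sum, tel, h0]; ring
    _ ≤ ∑ k ∈ range n, Real.sqrt (k+1) := Finset.sum_le_sum (fun k _ => sqrt_lb k)

lemma sum_sqrt_ub (n : ℕ) : ∑ k ∈ range n, Real.sqrt (k+1) ≤ (2/3) * (((n:ℝ)+1) ^ ((3:ℝ)/2) - 1) := by
  have tel : ∑ k ∈ range n, ((((k+2:ℕ):ℝ)) ^ ((3:ℝ)/2) - (((k+1:ℕ):ℝ)) ^ ((3:ℝ)/2)) = (((n+1:ℕ):ℝ)) ^ ((3:ℝ)/2) - (((1:ℕ):ℝ)) ^ ((3:ℝ)/2) :=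
    by have := Finset.sum_range_sub (fun k => (((k+1:ℕ):ℝ)) ^ ((3:ℝ)/2)) n
       push_cast at this ⊢; convert this using 3; ring_nf
  have h1 : (((1:ℕ):ℝ)) ^ ((3:ℝ)/2) = 1 := by norm_num
  calc ∑ k ∈ range n, Real.sqrt (k+1) ≤ ∑ k ∈ range n, (2/3) * ((((k+2:ℕ):ℝ)) ^ ((3:ℝ)/2) - (((k+1:ℕ):ℝ)) ^ ((3:ℝ)/2)) :=
        Finset.sum_le_sum (fun k _ => sqrt_ub k)
    _ = (2/3) * (((n:ℝ)+1) ^ ((3:ℝ)/2) - 1) := by rw [← Finset.mul_sum, tel, h1]; push_cast; ring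


lemma abel_sum (n : ℕ) :
    ∑ k ∈ range n, (Real.sqrt (k+1) - Real.sqrt k) * ((n - k : ℕ) : ℝ) = ∑ k ∈ range n, Real.sqrt (k+1) := by
  induction n with
  | zero => simp
  | succ n ih =>
    have tel : ∑ k ∈ range (n+1), (Real.sqrt (k+1) - Real.sqrt k) = Real.sqrt (n+1) := by
      have := Finset.sum_range_sub (fun k => Real.sqrt k) (n+1)
      push_cast at this ⊢
      simpa using this
    have split : ∀ k ∈ range (n+1), (Real.sqrt (k+1) - Real.sqrt k) * ((n + 1 - k : ℕ) : ℝ)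
        = (Real.sqrt (k+1) - Real.sqrt k) * ((n - k : ℕ) : ℝ) + (Real.sqrt (k+1) - Real.sqrt k) := by
      intro k hk
      rw [mem_range] at hk
      have hkn : k ≤ n := Nat.lt_succ_iff.mp hk
      have : (n + 1 - k : ℕ) = (n - k : ℕ) + 1 := by omega
      rw [this]; push_cast; ring
    rw [Finset.sum_congr rfl split, Finset.sum_add_distrib, tel]
    rw [Finset.sum_range_succ (fun k => (Real.sqrt (k+1) - Real.sqrt k) * ((n - k : ℕ) : ℝ))]
    simp only [Nat.sub_self, Nat.cast_zero, mul_zero, add_zero]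
    rw [ih, Finset.sum_range_succ]

lemma double_sum (g : ℕ → ℝ) (n : ℕ) :
    ∑ i ∈ range n, ∑ l ∈ range (i+1), g l = ∑ l ∈ range n, ((n - l : ℕ) : ℝ) * g l := by
  induction n with
  | zero => simp
  | succ n ih =>
    rw [Finset.sum_range_succ, ih, Finset.sum_range_succ, Finset.sum_range_succ ((fun l => ((n + 1 - l : ℕ) : ℝ) * g l))]
    simp only [Nat.sub_self, Nat.add_sub_cancel_left]
    have : ∀ l ∈ range n, ((n + 1 - l : ℕ) : ℝ) * g l = ((n - l : ℕ) : ℝ) * g l + g l := by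
      intro l hl; rw [mem_range] at hl
      have : (n + 1 - l : ℕ) = (n - l) + 1 := by omega
      rw [this]; push_cast; ring
    rw [Finset.sum_congr rfl this, Finset.sum_add_distrib]
    push_cast; ring

end Arith
section Helpers
open MeasureTheory
open scoped ENNReal

noncomputable def blockf (A B c : ℝ) : ℝ → ℝ := fun u => if A ≤ u ∧ u < B then c else 0

lemma blockf_eq (A B c : ℝ) : blockf A B c = (Set.Ico A B).indicator (fun _ => c) := by
  funext u; simp [blockf, Set.indicator, Set.mem_Ico]

lemma blockf_measurable (A B c : ℝ) : Measurable (blockf A B c) := by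
  rw [blockf_eq]; exact (measurable_const.indicator measurableSet_Ico)

lemma blockf_nonneg (A B c : ℝ) (hc : 0 ≤ c) (u : ℝ) : 0 ≤ blockf A B c u := by
  unfold blockf; split_ifs <;> simp [hc]

lemma blockf_integral (A B c : ℝ) (hAB : A ≤ B) (s : Set ℝ) (hsub : Set.Ico A B ⊆ s) :
    ∫ u in s, blockf A B c u = c * (B - A) := by
  rw [blockf_eq, MeasureTheory.setIntegral_indicator measurableSet_Ico,
    Set.inter_eq_self_of_subset_right hsub, MeasureTheory.setIntegral_const,
    measureReal_def, Real.volume_Ico, smul_eq_mul, ENNReal.toReal_ofReal (by linarith), mul_comm]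

lemma vol_Ico_inter_Ioi (A B : ℝ) (h0 : 0 ≤ A) (hAB : A ≤ B) :
    volume (Set.Ico A B ∩ Set.Ioi 0) = ENNReal.ofReal (B - A) := by
  apply le_antisymm
  · calc volume (Set.Ico A B ∩ Set.Ioi 0) ≤ volume (Set.Ico A B) := measure_mono Set.inter_subset_left
      _ = ENNReal.ofReal (B - A) := Real.volume_Ico
  · calc ENNReal.ofReal (B - A) = volume (Set.Ioo A B) := (Real.volume_Ioo).symm
      _ ≤ volume (Set.Ico A B ∩ Set.Ioi 0) := by
          apply measure_mono
          intro x hx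
          exact ⟨⟨le_of_lt hx.1, hx.2⟩, lt_of_le_of_lt h0 hx.1⟩

lemma blockf_lintegral (A B c : ℝ) (h0 : 0 ≤ A) (hAB : A ≤ B) :
    ∫⁻ u in Set.Ioi (0:ℝ), ENNReal.ofReal (blockf A B c u) = ENNReal.ofReal c * ENNReal.ofReal (B - A) := by
  have : (fun u => ENNReal.ofReal (blockf A B c u)) = (Set.Ico A B).indicator (fun _ => ENNReal.ofReal c) := by
    funext u; simp only [blockf, Set.indicator, Set.mem_Ico]; split_ifs <;> simp
  rw [show ∫⁻ u in Set.Ioi (0:ℝ), ENNReal.ofReal (blockf A B c u) = ∫⁻ u in Set.Ioi (0:ℝ), (Set.Ico A B).indicator (fun _ => ENNReal.ofReal c) u from by rw [this]]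
  rw [MeasureTheory.setLIntegral_indicator measurableSet_Ico, MeasureTheory.setLIntegral_const,
    vol_Ico_inter_Ioi A B h0 hAB]

lemma sq_sum_of_products_zero {α : Type*} (K : Finset α) (f : α → ℝ)
    (h : ∀ j ∈ K, ∀ j' ∈ K, j ≠ j' → f j * f j' = 0) :
    (∑ j ∈ K, f j)^2 = ∑ j ∈ K, (f j)^2 := by
  rw [sq, Finset.sum_mul_sum]
  apply Finset.sum_congr rfl
  intro j hj
  rw [Finset.sum_eq_single j (fun b hb hne => h j hj b hb (fun e => hne e.symm)) (fun h' => absurd hj h'), sq]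
end Helpers
section CompletePoint
open MeasureTheory
open scoped ENNReal

lemma complete_point (t c : ℝ) (f : ℝ → ℝ) (hf : Measurable f) (hf0 : ∀ u, 0 ≤ f u)
    (hint : (∫ u in Set.Ici t, f u) = 1)
    (hA : {u | t ≤ u ∧ (∫ v in Set.Icc t u, f v) = 1}.Nonempty)
    (hc : c = sInf {u | t ≤ u ∧ (∫ v in Set.Icc t u, f v) = 1}) :
    t ≤ c ∧ (∫⁻ u in Set.Icc t c, ENNReal.ofReal (f u)) = 1 := by
  set A := {u | t ≤ u ∧ (∫ v in Set.Icc t u, f v) = 1} with hAdef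
  have hbdd : BddBelow A := ⟨t, fun u hu => hu.1⟩
  have htc : t ≤ c := hc ▸ le_csInf hA (fun u hu => hu.1)
  refine ⟨htc, ?_⟩
  have hInt : IntegrableOn f (Set.Ici t) := by
    by_contra h
    rw [MeasureTheory.integral_undef h] at hint
    norm_num at hint
  have hae : 0 ≤ᵐ[volume.restrict (Set.Ici t)] f := Filter.Eventually.of_forall hf0
  have hlin_top : (∫⁻ u in Set.Ici t, ENNReal.ofReal (f u)) = 1 := by
    rw [← MeasureTheory.ofReal_integral_eq_lintegral_ofReal hInt hae, hint, ENNReal.ofReal_one]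
  have hlinA : ∀ u ∈ A, (∫⁻ v in Set.Icc t u, ENNReal.ofReal (f v)) = 1 := by
    intro u hu
    have hsub : Set.Icc t u ⊆ Set.Ici t := Set.Icc_subset_Ici_self
    have : IntegrableOn f (Set.Icc t u) := hInt.mono_set hsub
    rw [← MeasureTheory.ofReal_integral_eq_lintegral_ofReal this (Filter.Eventually.of_forall hf0), hu.2, ENNReal.ofReal_one]
  set ν := volume.withDensity (fun u => ENNReal.ofReal (f u)) with hν
  have hνap : ∀ s : Set ℝ, MeasurableSet s → ν s = ∫⁻ u in s, ENNReal.ofReal (f u) := by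
    intro s hs
    rw [hν, withDensity_apply _ hs]
  have hν1 : ∀ k : ℕ, ν (Set.Icc t (c + 1/(k+1))) = 1 := by
    intro k
    have hε : (0:ℝ) < 1/(k+1) := by positivity
    apply le_antisymm
    · calc ν (Set.Icc t (c + 1/(k+1))) ≤ ν (Set.Ici t) := measure_mono (Set.Icc_subset_Ici_self)
        _ = 1 := by rw [hνap _ measurableSet_Ici]; exact hlin_top
    · have hlt : sInf A < c + 1/(k+1) := by rw [← hc]; linarith
      obtain ⟨u, hu, hult⟩ := (csInf_lt_iff hbdd hA).1 hlt
      calc (1:ℝ≥0∞) = ν (Set.Icc t u) := by rw [hνap _ measurableSet_Icc, hlinA u hu]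
        _ ≤ ν (Set.Icc t (c + 1/(k+1))) := measure_mono (Set.Icc_subset_Icc_right (le_of_lt hult))
  have hiInter : (⋂ k : ℕ, Set.Icc t (c + 1/(k+1))) = Set.Icc t c := by
    ext x
    simp only [Set.mem_iInter, Set.mem_Icc]
    constructor
    · intro h
      refine ⟨(h 0).1, ?_⟩
      by_contra hlt
      push_neg at hlt
      obtain ⟨k, hk⟩ := exists_nat_one_div_lt (show (0:ℝ) < x - c by linarith)
      have := (h k).2
      linarith
    · intro h k
      have hε : (0:ℝ) < 1/(k+1) := by positivity
      exact ⟨h.1, by linarith [h.2]⟩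
  have htend : Filter.Tendsto (fun k : ℕ => ν (Set.Icc t (c + 1/(k+1)))) Filter.atTop (nhds (ν (⋂ k : ℕ, Set.Icc t (c + 1/(k+1))))) := by
    apply tendsto_measure_iInter_atTop
    · exact fun k => measurableSet_Icc.nullMeasurableSet
    · intro k k' hkk'
      apply Set.Icc_subset_Icc_right
      have : (1:ℝ)/(k'+1) ≤ 1/(k+1) := by
        apply one_div_le_one_div_of_le
        · positivity
        · exact_mod_cast by omega
      linarith
    · exact ⟨0, by rw [hν1 0]; exact ENNReal.one_ne_top⟩
  have : ν (Set.Icc t c) = 1 := by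
    rw [← hiInter]
    have hconst : Filter.Tendsto (fun k : ℕ => ν (Set.Icc t (c + 1/(k+1)))) Filter.atTop (nhds 1) := by
      simp only [hν1]; exact tendsto_const_nhds
    exact tendsto_nhds_unique htend hconst
  rw [← hνap _ measurableSet_Icc]
  exact this
end CompletePoint
section LBHelp
open MeasureTheory Finset
open scoped ENNReal

lemma exists_min_subset {α : Type*} [DecidableEq α] (K : Finset α) (c : α → ℝ) (q : ℕ) (hq : q ≤ K.card) :
    ∃ B ⊆ K, B.card = q ∧ ∀ j ∈ B, ∀ j' ∈ K \ B, c j ≤ c j' := by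
  induction q with
  | zero => exact ⟨∅, Finset.empty_subset _, Finset.card_empty, by simp⟩
  | succ q ih =>
    obtain ⟨B, hBK, hBcard, hBmin⟩ := ih (le_trans (Nat.le_succ q) hq)
    have hne : (K \ B).Nonempty := by
      rw [← Finset.card_pos, Finset.card_sdiff_of_subset hBK, hBcard]
      omega
    obtain ⟨j₀, hj₀, hj₀min⟩ := Finset.exists_min_image (K \ B) c hne
    have hj₀K : j₀ ∈ K := (Finset.mem_sdiff.1 hj₀).1
    have hj₀B : j₀ ∉ B := (Finset.mem_sdiff.1 hj₀).2
    refine ⟨insert j₀ B, Finset.insert_subset hj₀K hBK, ?_, ?_⟩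
    · rw [Finset.card_insert_of_notMem hj₀B, hBcard]
    · intro j hj j' hj'
      have hj'sd : j' ∈ K \ B := by
        rw [Finset.mem_sdiff] at hj' ⊢
        exact ⟨hj'.1, fun h => hj'.2 (Finset.mem_insert_of_mem h)⟩
      rcases Finset.mem_insert.1 hj with rfl | hjB
      · exact hj₀min j' hj'sd
      · exact hBmin j hjB j' hj'sd

lemma sqrt_nat_decomp (n m : ℕ) (hm : m ≤ n) :
    Real.sqrt m = ∑ k ∈ Finset.range n, (Real.sqrt (k+1) - Real.sqrt k) * (if k+1 ≤ m then 1 else 0) := by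
  have h1 : ∀ k ∈ Finset.range n, (Real.sqrt (k+1) - Real.sqrt k) * (if k+1 ≤ m then 1 else 0)
      = if k ∈ Finset.range m then (Real.sqrt (k+1) - Real.sqrt k) else 0 := by
    intro k _
    by_cases h : k + 1 ≤ m
    · rw [if_pos h, if_pos (Finset.mem_range.2 (by omega)), mul_one]
    · rw [if_neg h, if_neg (fun hc => h (by have := Finset.mem_range.1 hc; omega)), mul_zero]
  rw [Finset.sum_congr rfl h1, Finset.sum_ite_mem,
    Finset.inter_eq_right.2 (by intro x hx; rw [Finset.mem_range] at *; omega)]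
  have := Finset.sum_range_sub (fun k => Real.sqrt k) m
  push_cast at this
  simpa using this.symm

lemma ofReal_sqrt_decomp (n m : ℕ) (hm : m ≤ n) :
    ENNReal.ofReal (Real.sqrt m)
      = ∑ k ∈ Finset.range n, ENNReal.ofReal (Real.sqrt (k+1) - Real.sqrt k) * (if k+1 ≤ m then 1 else 0) := by
  rw [sqrt_nat_decomp n m hm]
  rw [ENNReal.ofReal_sum_of_nonneg]
  · apply Finset.sum_congr rfl
    intro k _
    by_cases h : k + 1 ≤ m
    · rw [if_pos h, if_pos h, mul_one, mul_one]
    · rw [if_neg h, if_neg h, mul_zero, mul_zero, ENNReal.ofReal_zero]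
  · intro k _
    have : Real.sqrt k ≤ Real.sqrt (k+1) := Real.sqrt_le_sqrt (by push_cast; linarith)
    by_cases h : k + 1 ≤ m
    · rw [if_pos h, mul_one]; linarith
    · rw [if_neg h, mul_zero]
end LBHelp
section Upper
open MeasureTheory Finset
open scoped ENNReal

variable (n : ℕ) (t : ℝ) (K : Finset Job)

lemma opt_upper_s9 (n : ℕ) (hn : 1 ≤ n) (t : ℝ) (ht : 0 ≤ t)
    (K : Finset Job) (hcard : K.card = n)
    (hjobs : ∀ j ∈ K, j.r = t ∧ j.p = 1) :
    OPT K ≤ ENNReal.ofReal ((4 / 3) * (((n : ℝ) + 1) ^ ((3 : ℝ) / 2) - 1)) := by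
  classical
  set e := K.equivFinOfCardEq hcard with he
  set idx : Job → ℕ := fun j => if h : j ∈ K then ((e ⟨j, h⟩ : Fin n) : ℕ) else 0 with hidx
  set g : ℕ → ℝ := fun l => 1 / Real.sqrt ((n - l : ℕ)) with hg
  set a : ℕ → ℝ := fun i => ∑ l ∈ Finset.range i, g l with ha
  have hg0 : ∀ l, 0 ≤ g l := fun l => by rw [hg]; positivity
  have ha0 : ∀ i, 0 ≤ a i := fun i => Finset.sum_nonneg fun l _ => hg0 l
  have hamono : Monotone a := fun i i' h =>
    Finset.sum_le_sum_of_subset_of_nonneg (Finset.range_subset_range.2 h) (fun l _ _ => hg0 l)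
  have hastep : ∀ i, a (i+1) - a i = g i := fun i => by
    simp only [ha, Finset.sum_range_succ]; ring
  have hidxlt : ∀ j ∈ K, idx j < n := by
    intro j hj; rw [hidx]; simp only [dif_pos hj]; exact (e ⟨j, hj⟩).2
  have hidxinj : ∀ j ∈ K, ∀ j' ∈ K, idx j = idx j' → j = j' := by
    intro j hj j' hj' hee
    rw [hidx] at hee; simp only [dif_pos hj, dif_pos hj'] at hee
    have : e ⟨j, hj⟩ = e ⟨j', hj'⟩ := Fin.ext hee
    have := e.injective this
    exact congrArg Subtype.val this
  have hpos : ∀ i, i < n → (0:ℝ) < Real.sqrt ((n - i : ℕ)) := by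
    intro i hi
    apply Real.sqrt_pos.2
    have : 1 ≤ n - i := by omega
    exact_mod_cast Nat.lt_of_lt_of_le Nat.zero_lt_one (by exact_mod_cast this)
  have hsqg : ∀ i, i < n → Real.sqrt ((n - i : ℕ)) * g i = 1 := by
    intro i hi
    rw [hg, mul_one_div, div_self (ne_of_gt (hpos i hi))]
  have hdivsq : ∀ i, ((n - i : ℕ) : ℝ) * g i = Real.sqrt ((n - i : ℕ)) := by
    intro i
    rw [hg, mul_one_div, Real.div_sqrt]
  -- the schedule
  set S : Sched := fun j => blockf (t + a (idx j)) (t + a (idx j + 1)) (Real.sqrt ((n - idx j : ℕ))) with hS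
  have hABle : ∀ i, t + a i ≤ t + a (i+1) := fun i => by
    have := hamono (Nat.le_succ i); linarith
  have hA0 : ∀ i, 0 ≤ t + a i := fun i => by have := ha0 i; linarith
  have hBA : ∀ i, (t + a (i+1)) - (t + a i) = g i := fun i => by
    have := hastep i; linarith
  -- feasibility
  have hfeas : Feasible K S := by
    intro j hj
    refine ⟨blockf_measurable _ _ _, fun u => blockf_nonneg _ _ _ (Real.sqrt_nonneg _) u, ?_, ?_⟩
    · intro u hu
      rw [(hjobs j hj).1] at hu
      simp only [hS, blockf]
      rw [if_neg]
      push_neg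
      intro hle; exfalso; have := hA0 (idx j); have := ha0 (idx j); linarith
    · rw [(hjobs j hj).1, (hjobs j hj).2]
      simp only [hS]
      rw [blockf_integral _ _ _ (hABle (idx j)) (Set.Ici t) (fun x hx => le_trans (by have := ha0 (idx j); linarith) hx.1)]
      rw [hBA]
      exact hsqg (idx j) (hidxlt j hj)
  -- reindexing lemma
  have hreindex : ∀ (F : ℕ → ℝ≥0∞), ∑ j ∈ K, F (idx j) = ∑ i ∈ Finset.range n, F i := by
    intro F
    rw [← Finset.sum_coe_sort K (fun j => F (idx j))]
    rw [← Equiv.sum_comp e.symm (fun x : {x // x ∈ K} => F (idx x))]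
    have : ∀ i : Fin n, idx ((e.symm i) : Job) = (i : ℕ) := by
      intro i
      have hm := (e.symm i).2
      rw [hidx]; simp only [dif_pos hm]
      congr 1
      rw [Subtype.coe_eta, Equiv.apply_symm_apply]
    rw [Fintype.sum_congr _ _ (fun i => by rw [this i])]
    exact Fin.sum_univ_eq_sum_range (fun i => F i) n
  -- completion times
  have hctime : ∀ j ∈ K, ctime S j ≤ ENNReal.ofReal (t + a (idx j + 1)) := by
    intro j hj
    have hwork : work S j (t + a (idx j + 1)) = 0 := by
      unfold work
      rw [(hjobs j hj).1, (hjobs j hj).2]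
      simp only [hS]
      rw [blockf_integral _ _ _ (hABle (idx j)) (Set.Icc t (t + a (idx j + 1))) ?hsub]
      · rw [hBA]; rw [hsqg (idx j) (hidxlt j hj)]; ring
      case hsub =>
        intro x hx
        constructor
        · exact le_trans (by have := ha0 (idx j); linarith) hx.1
        · exact le_of_lt hx.2
    refine iInf₂_le (t + a (idx j + 1)) ?_
    refine ⟨?_, hwork⟩
    rw [(hjobs j hj).1]
    have := ha0 (idx j + 1); linarith
  -- flow time bound
  have hflow : flowTime S K ≤ ∑ j ∈ K, ENNReal.ofReal (a (idx j + 1)) := by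
    unfold flowTime
    apply Finset.sum_le_sum
    intro j hj
    rw [(hjobs j hj).1]
    rw [tsub_le_iff_left]
    calc ctime S j ≤ ENNReal.ofReal (t + a (idx j + 1)) := hctime j hj
      _ ≤ ENNReal.ofReal t + ENNReal.ofReal (a (idx j + 1)) := ENNReal.ofReal_add_le
  -- energy
  have henergy : energy K S = ∑ j ∈ K, ENNReal.ofReal (Real.sqrt ((n - idx j : ℕ))) := by
    unfold energy
    have hptwise : ∀ u : ℝ, ENNReal.ofReal ((∑ j ∈ K, S j u)^2) = ∑ j ∈ K, ENNReal.ofReal ((S j u)^2) := by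
      intro u
      rw [sq_sum_of_products_zero K (fun j => S j u) ?hzero]
      · exact ENNReal.ofReal_sum_of_nonneg (fun j _ => sq_nonneg _)
      case hzero =>
        intro j hj j' hj' hne
        have hii : idx j ≠ idx j' := fun h => hne (hidxinj j hj j' hj' h)
        rcases Nat.lt_or_ge (idx j) (idx j') with h | h
        · have hle : a (idx j + 1) ≤ a (idx j') := hamono h
          simp only [hS, blockf]
          split_ifs with h1 h2 h2 <;> try ring
          exfalso; obtain ⟨h1a, h1b⟩ := h1; obtain ⟨h2a, h2b⟩ := h2; linarith
        · have h' : idx j' < idx j := by omega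
          have hle : a (idx j' + 1) ≤ a (idx j) := hamono h'
          simp only [hS, blockf]
          split_ifs with h1 h2 h2 <;> try ring
          exfalso; obtain ⟨h1a, h1b⟩ := h1; obtain ⟨h2a, h2b⟩ := h2; linarith
    calc ∫⁻ u in Set.Ioi (0:ℝ), ENNReal.ofReal ((∑ j ∈ K, S j u)^2)
        = ∫⁻ u in Set.Ioi (0:ℝ), ∑ j ∈ K, ENNReal.ofReal ((S j u)^2) := by
          apply lintegral_congr; intro u; exact hptwise u
      _ = ∑ j ∈ K, ∫⁻ u in Set.Ioi (0:ℝ), ENNReal.ofReal ((S j u)^2) := by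
          apply MeasureTheory.lintegral_finset_sum
          intro j hj
          exact ((((blockf_measurable _ _ _)).pow_const 2)).ennreal_ofReal
      _ = ∑ j ∈ K, ENNReal.ofReal (Real.sqrt ((n - idx j : ℕ))) := by
          apply Finset.sum_congr rfl
          intro j hj
          have hsq2 : ∀ u, (S j u)^2 = blockf (t + a (idx j)) (t + a (idx j + 1)) ((n - idx j : ℕ)) u := by
            intro u
            simp only [hS, blockf]
            split_ifs
            · exact Real.sq_sqrt (Nat.cast_nonneg _)
            · ring
          calc ∫⁻ u in Set.Ioi (0:ℝ), ENNReal.ofReal ((S j u)^2)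
              = ∫⁻ u in Set.Ioi (0:ℝ), ENNReal.ofReal (blockf (t + a (idx j)) (t + a (idx j + 1)) ((n - idx j : ℕ)) u) := by
                apply lintegral_congr; intro u; rw [hsq2 u]
            _ = ENNReal.ofReal ((n - idx j : ℕ)) * ENNReal.ofReal ((t + a (idx j + 1)) - (t + a (idx j))) :=
                blockf_lintegral _ _ _ (hA0 _) (hABle _)
            _ = ENNReal.ofReal (Real.sqrt ((n - idx j : ℕ))) := by
                rw [hBA, ← ENNReal.ofReal_mul (Nat.cast_nonneg _), hdivsq]
  -- the sqrt sum
  set Sfin := ∑ k ∈ Finset.range n, Real.sqrt ((k:ℝ)+1) with hSfin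
  have hrefl : ∑ i ∈ Finset.range n, Real.sqrt ((n - i : ℕ) : ℝ) = Sfin := by
    rw [hSfin, ← Finset.sum_range_reflect (fun k => Real.sqrt ((k:ℝ)+1)) n]
    apply Finset.sum_congr rfl
    intro i hi
    rw [Finset.mem_range] at hi
    congr 1
    have : (n - i : ℕ) = (n - 1 - i) + 1 := by omega
    rw [this]; push_cast; ring
  have henergy_le : energy K S ≤ ENNReal.ofReal Sfin := by
    rw [henergy, hreindex (fun i => ENNReal.ofReal (Real.sqrt ((n - i : ℕ))))]
    rw [← ENNReal.ofReal_sum_of_nonneg (fun i _ => Real.sqrt_nonneg _), hrefl]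
  have hflow_le : flowTime S K ≤ ENNReal.ofReal Sfin := by
    refine le_trans hflow ?_
    rw [hreindex (fun i => ENNReal.ofReal (a (i + 1)))]
    rw [← ENNReal.ofReal_sum_of_nonneg (fun i _ => ha0 _)]
    apply ENNReal.ofReal_le_ofReal
    have : ∑ i ∈ Finset.range n, a (i+1) = ∑ l ∈ Finset.range n, ((n - l : ℕ) : ℝ) * g l := by
      rw [ha]
      exact double_sum g n
    rw [this]
    rw [Finset.sum_congr rfl (fun l _ => hdivsq l)]
    rw [hrefl]
  -- finish
  have hcost : cost S K ≤ ENNReal.ofReal ((4 / 3) * (((n : ℝ) + 1) ^ ((3 : ℝ) / 2) - 1)) := by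
    calc cost S K = energy K S + flowTime S K := rfl
      _ ≤ ENNReal.ofReal Sfin + ENNReal.ofReal Sfin := add_le_add henergy_le hflow_le
      _ = ENNReal.ofReal (2 * Sfin) := by
          rw [← ENNReal.ofReal_add (Finset.sum_nonneg fun k _ => Real.sqrt_nonneg _) (Finset.sum_nonneg fun k _ => Real.sqrt_nonneg _)]
          rw [two_mul]
      _ ≤ ENNReal.ofReal ((4 / 3) * (((n : ℝ) + 1) ^ ((3 : ℝ) / 2) - 1)) := by
          apply ENNReal.ofReal_le_ofReal
          have h := sum_sqrt_ub n
          have : Sfin ≤ (2/3) * (((n:ℝ)+1) ^ ((3:ℝ)/2) - 1) := by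
            rw [hSfin]; simpa using h
          linarith
  exact le_trans (iInf₂_le S hfeas) hcost

end Upper
section Lower
open MeasureTheory Finset
open scoped ENNReal

lemma opt_lower_s9 (n : ℕ) (hn : 1 ≤ n) (t : ℝ) (ht : 0 ≤ t)
    (K : Finset Job) (hcard : K.card = n)
    (hjobs : ∀ j ∈ K, j.r = t ∧ j.p = 1) :
    ENNReal.ofReal ((4 / 3) * (n : ℝ) ^ ((3 : ℝ) / 2)) ≤ OPT K := by
  classical
  apply le_iInf; intro S; apply le_iInf; intro hfeas
  by_cases hall : ∀ j ∈ K, {u | t ≤ u ∧ (∫ v in Set.Icc t u, S j v) = 1}.Nonempty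
  · -- main case
    set c : Job → ℝ := fun j => sInf {u | t ≤ u ∧ (∫ v in Set.Icc t u, S j v) = 1} with hcdef
    have hcp : ∀ j ∈ K, t ≤ c j ∧ (∫⁻ u in Set.Icc t (c j), ENNReal.ofReal (S j u)) = 1 := by
      intro j hj
      obtain ⟨hm, hnn, hvan, hint⟩ := hfeas j hj
      rw [(hjobs j hj).1, (hjobs j hj).2] at hint
      exact complete_point t (c j) (S j) hm hnn hint (hall j hj) rfl
    have hctlb : ∀ j ∈ K, ENNReal.ofReal (c j) ≤ ctime S j := by
      intro j hj
      apply le_iInf; intro u; apply le_iInf; intro hu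
      apply ENNReal.ofReal_le_ofReal
      apply csInf_le ⟨t, fun v hv => hv.1⟩
      refine ⟨by rw [← (hjobs j hj).1]; exact hu.1, ?_⟩
      have h2 := hu.2
      unfold work at h2
      rw [(hjobs j hj).1, (hjobs j hj).2] at h2
      linarith
    set s : ℝ → ℝ := fun u => ∑ j ∈ K, S j u with hsdef
    have hsmeas : Measurable s := Finset.measurable_sum K (fun j hj => (hfeas j hj).1)
    have hsnn : ∀ u, 0 ≤ s u := fun u => Finset.sum_nonneg (fun j hj => (hfeas j hj).2.1 u)
    set mfun : ℝ → ℕ := fun u => (K.filter (fun j => u < c j)).card with hmdef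
    have hmmeas : Measurable mfun := by
      have heq : mfun = fun u => ∑ j ∈ K, if u < c j then 1 else 0 := by
        funext u; rw [hmdef]; exact Finset.card_filter _ _
      rw [heq]
      exact Finset.measurable_sum K (fun j _ => Measurable.ite measurableSet_Iio measurable_const measurable_const)
    have hmle : ∀ u, mfun u ≤ n := fun u => by
      rw [hmdef, ← hcard]; exact Finset.card_filter_le K _
    set χ : ℕ → ℝ → ℝ≥0∞ := fun k u => if k+1 ≤ mfun u then 1 else 0 with hχdef
    have hχmeas : ∀ k, Measurable (χ k) := by
      intro k
      apply Measurable.ite ?_ measurable_const measurable_const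
      exact hmmeas measurableSet_Ici
    -- key integral bound
    have hIkey : ∀ k ∈ Finset.range n, ((n - k : ℕ) : ℝ≥0∞) ≤ ∫⁻ u in Set.Ioi t, ENNReal.ofReal (s u) * χ k u := by
      intro k hk
      rw [Finset.mem_range] at hk
      obtain ⟨B, hBK, hBcard, hBmin⟩ := exists_min_subset K c (n - k) (by rw [hcard]; omega)
      have hclaim : ∀ j ∈ B, ∀ u ∈ Set.Ioo t (c j), k+1 ≤ mfun u := by
        intro j hj u hu
        have hjK : j ∈ K := hBK hj
        have hsub2 : insert j (K \ B) ⊆ K.filter (fun j' => u < c j') := by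
          apply Finset.insert_subset
          · exact Finset.mem_filter.2 ⟨hjK, hu.2⟩
          · intro j' hj'
            exact Finset.mem_filter.2 ⟨(Finset.mem_sdiff.1 hj').1,
              lt_of_lt_of_le hu.2 (hBmin j hj j' hj')⟩
        have hcard2 : (insert j (K \ B)).card = k + 1 := by
          rw [Finset.card_insert_of_notMem (fun h => (Finset.mem_sdiff.1 h).2 hj),
            Finset.card_sdiff_of_subset hBK, hcard, hBcard]
          omega
        calc k + 1 = (insert j (K \ B)).card := hcard2.symm
          _ ≤ (K.filter (fun j' => u < c j')).card := Finset.card_le_card hsub2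
      calc ((n - k : ℕ) : ℝ≥0∞) = ∑ _j ∈ B, (1:ℝ≥0∞) := by
            rw [Finset.sum_const, hBcard]; simp
        _ = ∑ j ∈ B, ∫⁻ u in Set.Ioo t (c j), ENNReal.ofReal (S j u) := by
            apply Finset.sum_congr rfl; intro j hj
            rw [setLIntegral_congr (Ioo_ae_eq_Icc), (hcp j (hBK hj)).2]
        _ ≤ ∑ j ∈ B, ∫⁻ u in Set.Ioi t, ENNReal.ofReal (S j u) * χ k u := by
            apply Finset.sum_le_sum; intro j hj
            calc ∫⁻ u in Set.Ioo t (c j), ENNReal.ofReal (S j u)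
                = ∫⁻ u in Set.Ioo t (c j), ENNReal.ofReal (S j u) * χ k u := by
                  apply setLIntegral_congr_fun measurableSet_Ioo
                  intro u hu
                  have : χ k u = 1 := by
                    rw [hχdef]; simp only [if_pos (hclaim j hj u hu)]
                  dsimp only
                  rw [this, mul_one]
              _ ≤ ∫⁻ u in Set.Ioi t, ENNReal.ofReal (S j u) * χ k u :=
                  lintegral_mono_set (fun u hu => hu.1)
        _ = ∫⁻ u in Set.Ioi t, ∑ j ∈ B, ENNReal.ofReal (S j u) * χ k u :=
            (MeasureTheory.lintegral_finset_sum _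
              (fun j hj => (((hfeas j (hBK hj)).1).ennreal_ofReal).mul (hχmeas k))).symm
        _ ≤ ∫⁻ u in Set.Ioi t, ENNReal.ofReal (s u) * χ k u := by
            apply lintegral_mono; intro u
            dsimp only
            rw [← Finset.sum_mul]
            apply mul_le_mul_left
            calc ∑ j ∈ B, ENNReal.ofReal (S j u) ≤ ∑ j ∈ K, ENNReal.ofReal (S j u) :=
                  Finset.sum_le_sum_of_subset hBK
              _ = ENNReal.ofReal (s u) :=
                  (ENNReal.ofReal_sum_of_nonneg (fun j hj => (hfeas j hj).2.1 u)).symm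
    -- flow time lower bound
    have hflow : (∫⁻ u in Set.Ioi t, (mfun u : ℝ≥0∞)) ≤ flowTime S K := by
      have hptw : ∀ u : ℝ, (mfun u : ℝ≥0∞) = ∑ j ∈ K, (Set.Iio (c j)).indicator (fun _ => (1:ℝ≥0∞)) u := by
        intro u
        rw [hmdef]
        simp only
        rw [Finset.card_filter, Nat.cast_sum]
        apply Finset.sum_congr rfl
        intro j _
        rw [Set.indicator_apply]
        by_cases h : u < c j
        · rw [if_pos h, if_pos (Set.mem_Iio.2 h)]; norm_num
        · rw [if_neg h, if_neg (fun hc => h (Set.mem_Iio.1 hc))]; norm_num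
      calc ∫⁻ u in Set.Ioi t, (mfun u : ℝ≥0∞)
          = ∑ j ∈ K, ∫⁻ u in Set.Ioi t, (Set.Iio (c j)).indicator (fun _ => (1:ℝ≥0∞)) u := by
            rw [← MeasureTheory.lintegral_finset_sum _
              (fun j _ => (measurable_const.indicator measurableSet_Iio))]
            apply lintegral_congr; intro u; exact hptw u
        _ = ∑ j ∈ K, ENNReal.ofReal (c j - t) := by
            apply Finset.sum_congr rfl; intro j _
            rw [MeasureTheory.setLIntegral_indicator measurableSet_Iio,
              MeasureTheory.setLIntegral_const, Set.Iio_inter_Ioi, one_mul, Real.volume_Ioo]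
        _ ≤ ∑ j ∈ K, (ctime S j - ENNReal.ofReal j.r) := by
            apply Finset.sum_le_sum; intro j hj
            rw [(hjobs j hj).1]
            calc ENNReal.ofReal (c j - t) = ENNReal.ofReal (c j) - ENNReal.ofReal t :=
                  ENNReal.ofReal_sub _ ht
              _ ≤ ctime S j - ENNReal.ofReal t := tsub_le_tsub_right (hctlb j hj) _
        _ = flowTime S K := rfl
    -- energy lower bound
    have henergy : (∫⁻ u in Set.Ioi t, ENNReal.ofReal ((s u)^2)) ≤ energy K S := by
      unfold energy
      exact lintegral_mono_set (Set.Ioi_subset_Ioi ht)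
    -- pointwise AM-GM
    have hAM : ∀ u, 2 * (ENNReal.ofReal (s u) * ENNReal.ofReal (Real.sqrt (mfun u)))
        ≤ ENNReal.ofReal ((s u)^2) + (mfun u : ℝ≥0∞) := by
      intro u
      rw [← ENNReal.ofReal_natCast (mfun u), ← ENNReal.ofReal_add (sq_nonneg _) (Nat.cast_nonneg _),
        ← ENNReal.ofReal_mul (hsnn u), ← ENNReal.ofReal_ofNat 2,
        ← ENNReal.ofReal_mul (by norm_num)]
      apply ENNReal.ofReal_le_ofReal
      have key : ∀ x m : ℝ, 0 ≤ m → 2 * (x * Real.sqrt m) ≤ x ^ 2 + m := by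
        intro x m hm
        nlinarith [sq_nonneg (x - Real.sqrt m), Real.sq_sqrt hm]
      exact key (s u) ((mfun u : ℝ)) (Nat.cast_nonneg _)
    -- decomposition
    have hdec : ∀ u, 2 * (ENNReal.ofReal (s u) * ENNReal.ofReal (Real.sqrt (mfun u)))
        = ∑ k ∈ Finset.range n, 2 * ENNReal.ofReal (Real.sqrt (k+1) - Real.sqrt k) * (ENNReal.ofReal (s u) * χ k u) := by
      intro u
      rw [ofReal_sqrt_decomp n (mfun u) (hmle u), Finset.mul_sum, Finset.mul_sum]
      apply Finset.sum_congr rfl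
      intro k _
      have : χ k u = if k+1 ≤ mfun u then 1 else 0 := by rw [hχdef]
      rw [this]
      ring
    -- final chain
    calc ENNReal.ofReal ((4 / 3) * (n : ℝ) ^ ((3 : ℝ) / 2))
        ≤ ENNReal.ofReal (2 * ∑ k ∈ Finset.range n, Real.sqrt ((k:ℝ)+1)) := by
          apply ENNReal.ofReal_le_ofReal
          have := sum_sqrt_lb n
          linarith
      _ = ∑ k ∈ Finset.range n, 2 * ENNReal.ofReal (Real.sqrt (k+1) - Real.sqrt k) * ((n - k : ℕ) : ℝ≥0∞) := by
          rw [show (2 * ∑ k ∈ Finset.range n, Real.sqrt ((k:ℝ)+1))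
              = ∑ k ∈ Finset.range n, 2 * ((Real.sqrt (k+1) - Real.sqrt k) * ((n - k : ℕ) : ℝ)) from by
            rw [← Finset.mul_sum, abel_sum n]]
          rw [ENNReal.ofReal_sum_of_nonneg]
          · apply Finset.sum_congr rfl
            intro k _
            have hnn : (0:ℝ) ≤ Real.sqrt (k+1) - Real.sqrt k := by
              have : Real.sqrt k ≤ Real.sqrt (k+1) := Real.sqrt_le_sqrt (by push_cast; linarith)
              linarith
            rw [ENNReal.ofReal_mul (by norm_num), ENNReal.ofReal_mul hnn,
              ENNReal.ofReal_natCast, ENNReal.ofReal_ofNat, mul_assoc]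
          · intro k _
            have : Real.sqrt k ≤ Real.sqrt (k+1) := Real.sqrt_le_sqrt (by push_cast; linarith)
            exact mul_nonneg (by norm_num) (mul_nonneg (by linarith) (Nat.cast_nonneg _))
      _ ≤ ∑ k ∈ Finset.range n, 2 * ENNReal.ofReal (Real.sqrt (k+1) - Real.sqrt k)
            * (∫⁻ u in Set.Ioi t, ENNReal.ofReal (s u) * χ k u) := by
          apply Finset.sum_le_sum; intro k hk
          exact mul_le_mul_right (hIkey k hk) _
      _ = ∫⁻ u in Set.Ioi t, ∑ k ∈ Finset.range n,
            2 * ENNReal.ofReal (Real.sqrt (k+1) - Real.sqrt k) * (ENNReal.ofReal (s u) * χ k u) := by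
          rw [MeasureTheory.lintegral_finset_sum (f := fun (k : ℕ) u => 2 * ENNReal.ofReal (Real.sqrt (k+1) - Real.sqrt k) * (ENNReal.ofReal (s u) * χ k u)) _
            (fun (k : ℕ) _ => ((measurable_const.mul (hsmeas.ennreal_ofReal.mul (hχmeas k))) : Measurable fun u => 2 * ENNReal.ofReal (Real.sqrt (k+1) - Real.sqrt k) * (ENNReal.ofReal (s u) * χ k u)))]
          apply Finset.sum_congr rfl; intro k _
          exact (MeasureTheory.lintegral_const_mul _ (hsmeas.ennreal_ofReal.mul (hχmeas k))).symm
      _ = ∫⁻ u in Set.Ioi t, 2 * (ENNReal.ofReal (s u) * ENNReal.ofReal (Real.sqrt (mfun u))) := by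
          apply lintegral_congr; intro u; exact (hdec u).symm
      _ ≤ ∫⁻ u in Set.Ioi t, (ENNReal.ofReal ((s u)^2) + (mfun u : ℝ≥0∞)) := lintegral_mono hAM
      _ = (∫⁻ u in Set.Ioi t, ENNReal.ofReal ((s u)^2)) + ∫⁻ u in Set.Ioi t, (mfun u : ℝ≥0∞) :=
          MeasureTheory.lintegral_add_left ((hsmeas.pow_const 2).ennreal_ofReal) _
      _ ≤ energy K S + flowTime S K := add_le_add henergy hflow
      _ = cost S K := rfl
  · -- some job never completes
    push_neg at hall
    obtain ⟨j, hj, hempty⟩ := hall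
    have hnone : ∀ u : ℝ, ¬ (j.r ≤ u ∧ work S j u = 0) := by
      intro u hu
      have hmem : u ∈ {u | t ≤ u ∧ (∫ v in Set.Icc t u, S j v) = 1} := by
        refine ⟨?_, ?_⟩
        · rw [← (hjobs j hj).1]; exact hu.1
        · have h2 := hu.2
          unfold work at h2
          rw [(hjobs j hj).1, (hjobs j hj).2] at h2
          linarith
      rw [hempty] at hmem
      exact hmem
    have hctop : ctime S j = ⊤ := by
      unfold ctime
      rw [iInf_congr (fun u => iInf_neg (hnone u))]
      exact iInf_const
    have hft : flowTime S K = ⊤ := by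
      unfold flowTime
      rw [ENNReal.sum_eq_top]
      exact ⟨j, hj, by rw [hctop]; exact ENNReal.top_sub ENNReal.ofReal_ne_top⟩
    have : cost S K = ⊤ := by
      unfold cost; rw [hft, add_top]
    rw [this]; exact le_top
end Lower

/-- **Lemma B.3.** For an instance `𝒦` of `n` unit-work jobs all released at
the same time `t ≥ 0`, one has
`(4/3)·n^{3/2} ≤ OPT(𝒦) ≤ (4/3)·((n+1)^{3/2} − 1)`. -/
theorem opt_simultaneous_unit_jobs (n : ℕ) (hn : 1 ≤ n) (t : ℝ) (ht : 0 ≤ t)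
    (K : Finset Job) (hcard : K.card = n)
    (hjobs : ∀ j ∈ K, j.r = t ∧ j.p = 1) :
    ENNReal.ofReal ((4 / 3) * (n : ℝ) ^ ((3 : ℝ) / 2)) ≤ OPT K ∧
      OPT K ≤ ENNReal.ofReal ((4 / 3) * (((n : ℝ) + 1) ^ ((3 : ℝ) / 2) - 1)) :=
  ⟨opt_lower_s9 n hn t ht K hcard hjobs, opt_upper_s9 n hn t ht K hcard hjobs⟩
end

section
/- Consider the energy plus flow time objective with α = 2, and let 𝒦 = {j_1, …, j_m} be an instance of m unit-work jobs (p_j = 1) whose release times satisfy r_{i+1} − r_i ≥ 1 for all 1 ≤ i < m. Then OPT(𝒦) = 2m. -/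
/-! STATEMENT 11 (Lemma B.4): optimal energy plus flow time cost (α = 2) of m unit jobs whose consecutive release times are at least 1 apart equals 2m. -/

open MeasureTheory Finset
open scoped ENNReal BigOperators Classical

/-- Cauchy–Schwarz: a unit of work done on `(a, b]` costs at least `1/(b-a)` energy. -/
lemma cs_aux {a b : ℝ} (hab : a < b) {g : ℝ → ℝ} (hgm : Measurable g)
    (hgnn : ∀ t, 0 ≤ g t) (hgi : MeasureTheory.IntegrableOn g (Set.Ioc a b))
    (hint : (∫ t in Set.Ioc a b, g t) = 1) :
    ENNReal.ofReal (1 / (b - a)) ≤ ∫⁻ t in Set.Ioc a b, ENNReal.ofReal (g t ^ 2) := by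
  set μ := (volume : Measure ℝ).restrict (Set.Ioc a b) with hμdef
  have h1 : (∫⁻ t, ENNReal.ofReal (g t) ∂μ) = 1 := by
    rw [← MeasureTheory.ofReal_integral_eq_lintegral_ofReal hgi
      (Filter.Eventually.of_forall hgnn), hint, ENNReal.ofReal_one]
  have hconj : Real.HolderConjugate 2 2 := ⟨by norm_num, by norm_num, by norm_num⟩
  have hcs := ENNReal.lintegral_mul_le_Lp_mul_Lq μ hconj
    (f := fun t => ENNReal.ofReal (g t)) (g := fun _ => 1)
    (ENNReal.measurable_ofReal.comp hgm).aemeasurable aemeasurable_const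
  have hμuniv : μ Set.univ = ENNReal.ofReal (b - a) := by
    simp [hμdef, Real.volume_Ioc]
  have hpow : ∀ t : ℝ, (ENNReal.ofReal (g t)) ^ (2 : ℝ) = ENNReal.ofReal (g t ^ 2) := by
    intro t
    rw [show (2:ℝ) = ((2:ℕ):ℝ) by norm_num, ENNReal.rpow_natCast,
      ENNReal.ofReal_pow (hgnn t)]
  simp only [Pi.mul_apply, mul_one, ENNReal.one_rpow, lintegral_const, one_mul,
    hμuniv, h1, hpow] at hcs
  set E := ∫⁻ t, ENNReal.ofReal (g t ^ 2) ∂μ with hE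
  have hsq : (1 : ℝ≥0∞) ≤ E * ENNReal.ofReal (b - a) := by
    have h2 := mul_le_mul' hcs hcs
    rw [one_mul] at h2
    calc (1:ℝ≥0∞) ≤ _ := h2
    _ = (E ^ (1/2:ℝ) * E ^ (1/2:ℝ)) * ((ENNReal.ofReal (b-a)) ^ (1/2:ℝ) *
        (ENNReal.ofReal (b-a)) ^ (1/2:ℝ)) := by ring
    _ = E * ENNReal.ofReal (b - a) := by
        rw [← ENNReal.rpow_add_of_nonneg (x := E) (1/2) (1/2) (by norm_num) (by norm_num),
          ← ENNReal.rpow_add_of_nonneg (x := ENNReal.ofReal (b-a)) (1/2) (1/2)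
            (by norm_num) (by norm_num)]
        norm_num
  have hba : 0 < b - a := by linarith
  rw [show (1:ℝ)/(b-a) = (b-a)⁻¹ by ring, ENNReal.ofReal_inv_of_pos hba]
  rw [← ENNReal.div_le_iff_le_mul (Or.inl (by positivity)) (Or.inl (by simp))] at hsq
  simpa [one_div] using hsq

/-- Per-job lower bound: energy spent on a unit job plus its flow time is at least 2. -/
lemma perjob (S : Sched) (j : Job) (hr : 0 ≤ j.r) (hp1 : j.p = 1)
    (hgm : Measurable (S j)) (hgnn : ∀ t, 0 ≤ S j t)
    (hint : (∫ t in Set.Ici j.r, S j t) = j.p) :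
    (2 : ℝ≥0∞) ≤ (∫⁻ t in Set.Ioi (0:ℝ), ENNReal.ofReal (S j t ^ 2)) +
      (ctime S j - ENNReal.ofReal j.r) := by
  classical
  set T : Set ℝ := {t | j.r ≤ t ∧ work S j t = 0} with hT
  by_cases hne : T.Nonempty
  · have hIci : MeasureTheory.IntegrableOn (S j) (Set.Ici j.r) := by
      by_contra h
      rw [MeasureTheory.integral_undef h] at hint
      rw [hp1] at hint; norm_num at hint
    have hTint : ∀ t ∈ T, (∫ u in Set.Ioc j.r t, S j u) = 1 := by
      intro t ht
      have h2 : (∫ u in Set.Icc j.r t, S j u) = 1 := by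
        have := ht.2
        rw [work, hp1] at this; linarith
      rwa [MeasureTheory.integral_Icc_eq_integral_Ioc] at h2
    have hTgt : ∀ t ∈ T, j.r < t := by
      intro t ht
      rcases lt_or_eq_of_le ht.1 with h | h
      · exact h
      · exfalso
        have h1 := hTint t ht
        rw [← h] at h1
        simp at h1
    set c := sInf T with hc
    have hbdd : BddBelow T := ⟨j.r, fun t ht => ht.1⟩
    have hcr : j.r ≤ c := le_csInf hne fun t ht => ht.1
    have hctime : ENNReal.ofReal c ≤ ctime S j := by
      refine le_iInf₂ fun t ht => ?_
      exact ENNReal.ofReal_le_ofReal (csInf_le hbdd ht)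
    have hflow : ENNReal.ofReal (c - j.r) ≤ ctime S j - ENNReal.ofReal j.r := by
      rw [ENNReal.ofReal_sub _ hr]
      exact tsub_le_tsub_right hctime _
    refine ENNReal.le_of_forall_pos_le_add fun ε hε _ => ?_
    obtain ⟨t₀, ht₀T, ht₀⟩ := (csInf_lt_iff hbdd hne).mp
      (by linarith [show (0:ℝ) < (ε:ℝ) from hε] : sInf T < c + (ε:ℝ))
    have hrt₀ : j.r < t₀ := hTgt t₀ ht₀T
    have hcsub : Set.Ioc j.r t₀ ⊆ Set.Ioi (0:ℝ) := fun u hu => lt_of_le_of_lt hr hu.1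
    have hE : ENNReal.ofReal (1 / (t₀ - j.r)) ≤
        ∫⁻ t in Set.Ioi (0:ℝ), ENNReal.ofReal (S j t ^ 2) := by
      refine le_trans (cs_aux hrt₀ hgm hgnn (hIci.mono_set ?_) (hTint t₀ ht₀T)) ?_
      · exact fun u hu => le_of_lt hu.1
      · exact lintegral_mono_set hcsub
    calc (2:ℝ≥0∞) = ENNReal.ofReal 2 := by norm_num
    _ ≤ ENNReal.ofReal (1 / (t₀ - j.r) + (c - j.r) + (ε:ℝ)) := by
        apply ENNReal.ofReal_le_ofReal
        have h1 : 0 < t₀ - j.r := by linarith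
        have h2 : t₀ - j.r ≤ (c - j.r) + (ε:ℝ) := by linarith
        have hx : (1 / (t₀ - j.r)) * (t₀ - j.r) = 1 := by field_simp
        nlinarith [sq_nonneg (t₀ - j.r - 1), hx, h1]
    _ = ENNReal.ofReal (1 / (t₀ - j.r)) + ENNReal.ofReal (c - j.r) + ENNReal.ofReal (ε:ℝ) := by
        have h1 : 0 < t₀ - j.r := by linarith
        have h2 : (0:ℝ) ≤ c - j.r := by linarith
        rw [ENNReal.ofReal_add (add_nonneg (div_nonneg zero_le_one h1.le) h2) ε.coe_nonneg,
          ENNReal.ofReal_add (div_nonneg zero_le_one h1.le) h2]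
    _ ≤ (∫⁻ t in Set.Ioi (0:ℝ), ENNReal.ofReal (S j t ^ 2)) +
        (ctime S j - ENNReal.ofReal j.r) + (ε : ℝ≥0∞) := by
        gcongr
        simp [ENNReal.ofReal_coe_nnreal]
  · have htop : ctime S j = ⊤ := by
      rw [ctime, iInf_eq_top]
      intro t
      rw [iInf_eq_top]
      intro ht
      exact absurd ⟨t, ht⟩ hne
    rw [htop, ENNReal.top_sub (by simp)]
    simp

/-- **Lemma B.4.** For an instance `𝒦 = {j_1, …, j_m}` of `m` unit-work jobs
with `r_{i+1} − r_i ≥ 1` for all `i`, one has `OPT(𝒦) = 2m`. -/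
theorem opt_spread_unit_jobs (m : ℕ) (hm : 1 ≤ m)
    (f : Fin m → Job) (hinj : Function.Injective f)
    (hval : ValidInstance (Finset.univ.image f))
    (hp : ∀ i, (f i).p = 1)
    (hgap : ∀ (i : ℕ) (h : i + 1 < m),
      1 ≤ (f ⟨i + 1, h⟩).r - (f ⟨i, Nat.lt_of_succ_lt h⟩).r) :
    OPT (Finset.univ.image f) = ENNReal.ofReal (2 * m) := by
  classical
  set K := Finset.univ.image f with hK
  have hmemr : ∀ j ∈ K, 0 ≤ j.r := fun j hj => (hval j hj).1
  have hmemp : ∀ j ∈ K, j.p = 1 := by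
    intro j hj
    obtain ⟨i, _, rfl⟩ := Finset.mem_image.mp hj
    exact hp i
  have hcard : K.card = m := by
    rw [hK, Finset.card_image_of_injective _ hinj, Finset.card_univ, Fintype.card_fin]
  have h2m : ENNReal.ofReal (2 * (m:ℝ)) = (m : ℝ≥0∞) * 2 := by
    rw [ENNReal.ofReal_mul (by norm_num : (0:ℝ) ≤ 2)]
    simp [ENNReal.ofReal_natCast, mul_comm]
  -- key monotonicity of release times
  have key : ∀ b (hb : b < m) a (ha : a < m), a < b →
      (f ⟨a, ha⟩).r + 1 ≤ (f ⟨b, hb⟩).r := by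
    intro b
    induction b with
    | zero => intro hb a ha h; omega
    | succ n ih =>
      intro hb a ha h
      rcases Nat.lt_succ_iff_lt_or_eq.mp h with h' | h'
      · have h1 := ih (Nat.lt_of_succ_lt hb) a ha h'
        have h2 := hgap n hb
        linarith
      · subst h'
        have h2 := hgap a hb
        linarith
  have hdisj : ∀ i k : Fin m, i ≠ k →
      Disjoint (Set.Ico (f i).r ((f i).r + 1)) (Set.Ico (f k).r ((f k).r + 1)) := by
    intro i k hik
    rcases lt_or_gt_of_ne (fun h : (i:ℕ) = (k:ℕ) => hik (Fin.ext h)) with h | h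
    · have := key k k.isLt i i.isLt h
      rw [Set.disjoint_left]
      rintro t ⟨_, h2⟩ ⟨h3, _⟩
      simp only [Fin.eta] at this
      linarith
    · have := key i i.isLt k k.isLt h
      rw [Set.disjoint_left]
      rintro t ⟨h2, _⟩ ⟨_, h4⟩
      simp only [Fin.eta] at this
      linarith
  -- the canonical schedule
  set S0 : Sched := fun j t => Set.indicator (Set.Ico j.r (j.r + 1)) (fun _ => (1:ℝ)) t
    with hS0
  have hS0nn : ∀ j t, 0 ≤ S0 j t := fun j t =>
    Set.indicator_nonneg (fun _ _ => zero_le_one) t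
  have hS0m : ∀ j, Measurable (S0 j) := fun j =>
    (measurable_const.indicator measurableSet_Ico)
  have hIcoInt : ∀ (j : Job) (s : Set ℝ), MeasurableSet s →
      (∫ t in s, S0 j t) = (volume (Set.Ico j.r (j.r + 1) ∩ s)).toReal := by
    intro j s hs
    rw [hS0]
    rw [MeasureTheory.integral_indicator measurableSet_Ico,
      Measure.restrict_restrict measurableSet_Ico, setIntegral_const, smul_eq_mul, mul_one]
    rfl
  have hfeas : Feasible K S0 := by
    intro j hj
    refine ⟨hS0m j, fun t => hS0nn j t, ?_, ?_⟩
    · intro t ht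
      apply Set.indicator_of_notMem
      rw [Set.mem_Ico]; push_neg; intro h; linarith
    · rw [hIcoInt j _ measurableSet_Ici, hmemp j hj]
      have : Set.Ico j.r (j.r + 1) ∩ Set.Ici j.r = Set.Ico j.r (j.r + 1) := by
        apply Set.inter_eq_left.mpr
        exact fun t ht => ht.1
      rw [this, Real.volume_Ico]
      simp
  have hwork : ∀ j ∈ K, work S0 j (j.r + 1) = 0 := by
    intro j hj
    rw [work, hmemp j hj, hIcoInt j _ measurableSet_Icc]
    have : Set.Ico j.r (j.r + 1) ∩ Set.Icc j.r (j.r + 1) = Set.Ico j.r (j.r + 1) := by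
      apply Set.inter_eq_left.mpr
      exact fun t ht => ⟨ht.1, le_of_lt ht.2⟩
    rw [this, Real.volume_Ico]
    simp
  have hctime : ∀ j ∈ K, ctime S0 j ≤ ENNReal.ofReal (j.r + 1) := by
    intro j hj
    refine iInf_le_of_le (j.r + 1) (iInf_le_of_le ⟨by linarith, hwork j hj⟩ le_rfl)
  have hflowle : flowTime S0 K ≤ (m : ℝ≥0∞) := by
    rw [flowTime]
    calc ∑ j ∈ K, (ctime S0 j - ENNReal.ofReal j.r)
        ≤ ∑ j ∈ K, (1 : ℝ≥0∞) := by
          apply Finset.sum_le_sum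
          intro j hj
          calc ctime S0 j - ENNReal.ofReal j.r
              ≤ ENNReal.ofReal (j.r + 1) - ENNReal.ofReal j.r :=
                tsub_le_tsub_right (hctime j hj) _
          _ = ENNReal.ofReal ((j.r + 1) - j.r) := (ENNReal.ofReal_sub _ (hmemr j hj)).symm
          _ = 1 := by norm_num
    _ = (m : ℝ≥0∞) := by rw [Finset.sum_const, hcard, nsmul_eq_mul, mul_one]
  -- energy of the canonical schedule
  have hsumsq : ∀ t : ℝ, ((∑ j ∈ K, S0 j t) ^ 2) = ∑ i : Fin m, S0 (f i) t := by
    intro t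
    rw [hK, Finset.sum_image (fun a _ b _ h => hinj h)]
    by_cases hex : ∃ i : Fin m, t ∈ Set.Ico (f i).r ((f i).r + 1)
    · obtain ⟨i₀, hi₀⟩ := hex
      have hsum : (∑ i : Fin m, S0 (f i) t) = 1 := by
        rw [Finset.sum_eq_single i₀]
        · rw [hS0]; simp [Set.indicator_of_mem hi₀]
        · intro k _ hk
          apply Set.indicator_of_notMem
          intro hmem
          exact Set.disjoint_left.mp (hdisj k i₀ hk) hmem hi₀
        · intro h; exact absurd (Finset.mem_univ i₀) h
      rw [hsum]; norm_num
    · push_neg at hex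
      have hz : ∀ i : Fin m, S0 (f i) t = 0 := fun i =>
        Set.indicator_of_notMem (hex i) _
      simp [hz]
  have hen : energy K S0 = (m : ℝ≥0∞) := by
    rw [energy]
    have step1 : ∀ t : ℝ, ENNReal.ofReal ((∑ j ∈ K, S0 j t) ^ 2) =
        ∑ i : Fin m, ENNReal.ofReal (S0 (f i) t) := by
      intro t
      rw [hsumsq t, ENNReal.ofReal_sum_of_nonneg (fun i _ => hS0nn (f i) t)]
    calc ∫⁻ t in Set.Ioi (0:ℝ), ENNReal.ofReal ((∑ j ∈ K, S0 j t) ^ 2)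
        = ∫⁻ t in Set.Ioi (0:ℝ), ∑ i : Fin m, ENNReal.ofReal (S0 (f i) t) := by
          exact lintegral_congr fun t => step1 t
    _ = ∑ i : Fin m, ∫⁻ t in Set.Ioi (0:ℝ), ENNReal.ofReal (S0 (f i) t) := by
          exact lintegral_finset_sum _ fun i _ =>
            (ENNReal.measurable_ofReal.comp (hS0m (f i)))
    _ = ∑ _i : Fin m, (1 : ℝ≥0∞) := by
          apply Finset.sum_congr rfl
          intro i _
          have hr : 0 ≤ (f i).r := hmemr (f i) (Finset.mem_image_of_mem f (Finset.mem_univ i))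
          have hind : ∀ t : ℝ, ENNReal.ofReal (S0 (f i) t) =
              Set.indicator (Set.Ico (f i).r ((f i).r + 1)) (fun _ => (1:ℝ≥0∞)) t := by
            intro t
            rw [hS0]
            by_cases ht : t ∈ Set.Ico (f i).r ((f i).r + 1)
            · simp [Set.indicator_of_mem ht]
            · simp [Set.indicator_of_notMem ht]
          rw [lintegral_congr fun t => hind t]
          rw [lintegral_indicator measurableSet_Ico,
            Measure.restrict_restrict measurableSet_Ico, setLIntegral_one]
          apply le_antisymm
          · calc volume (Set.Ico (f i).r ((f i).r + 1) ∩ Set.Ioi 0)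
                ≤ volume (Set.Ico (f i).r ((f i).r + 1)) :=
                  measure_mono Set.inter_subset_left
            _ = 1 := by rw [Real.volume_Ico]; norm_num
          · calc (1:ℝ≥0∞) = volume (Set.Ioo (f i).r ((f i).r + 1)) := by
                  rw [Real.volume_Ioo]; norm_num
            _ ≤ volume (Set.Ico (f i).r ((f i).r + 1) ∩ Set.Ioi 0) := by
                  apply measure_mono
                  intro t ht
                  exact ⟨⟨le_of_lt ht.1, ht.2⟩, lt_of_le_of_lt hr ht.1⟩
    _ = (m : ℝ≥0∞) := by rw [Finset.sum_const, Finset.card_univ, Fintype.card_fin,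
          nsmul_eq_mul, mul_one]
  -- upper bound
  have hub : OPT K ≤ ENNReal.ofReal (2 * m) := by
    calc OPT K ≤ cost S0 K := iInf₂_le S0 hfeas
    _ = energy K S0 + flowTime S0 K := rfl
    _ ≤ (m : ℝ≥0∞) + (m : ℝ≥0∞) := by rw [hen]; exact add_le_add_right hflowle _
    _ = ENNReal.ofReal (2 * m) := by rw [h2m]; ring
  -- lower bound
  have hlb : ENNReal.ofReal (2 * m) ≤ OPT K := by
    refine le_iInf₂ fun S hS => ?_
    have henergy : ∑ j ∈ K, (∫⁻ t in Set.Ioi (0:ℝ), ENNReal.ofReal (S j t ^ 2)) ≤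
        energy K S := by
      rw [energy, ← lintegral_finset_sum]
      · apply lintegral_mono
        intro t
        dsimp only
        rw [← ENNReal.ofReal_sum_of_nonneg (fun j _ => sq_nonneg (S j t))]
        apply ENNReal.ofReal_le_ofReal
        exact Finset.sum_sq_le_sq_sum_of_nonneg fun j hj => (hS j hj).2.1 t
      · intro j hj
        exact (ENNReal.measurable_ofReal.comp ((hS j hj).1.pow_const 2))
    calc ENNReal.ofReal (2 * m) = ∑ _j ∈ K, (2:ℝ≥0∞) := by
          rw [Finset.sum_const, hcard, nsmul_eq_mul, h2m]
    _ ≤ ∑ j ∈ K, ((∫⁻ t in Set.Ioi (0:ℝ), ENNReal.ofReal (S j t ^ 2)) +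
          (ctime S j - ENNReal.ofReal j.r)) := by
          apply Finset.sum_le_sum
          intro j hj
          exact perjob S j (hmemr j hj) (hmemp j hj) (hS j hj).1 (hS j hj).2.1
            (hS j hj).2.2.2
    _ = (∑ j ∈ K, ∫⁻ t in Set.Ioi (0:ℝ), ENNReal.ofReal (S j t ^ 2)) +
          ∑ j ∈ K, (ctime S j - ENNReal.ofReal j.r) := Finset.sum_add_distrib
    _ ≤ energy K S + flowTime S K := add_le_add henergy le_rfl
    _ = cost S K := rfl
  exact le_antisymm hub hlb
end
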